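/- arXiv:2304.04417 — 6 statements merged into one kernel-verified Lean document; each statement's English description precedes it below -/
import Mathlib

section
/- There exist constants A > 0 and c₀ > 0 such that for all 0 < c < c₀, | d(c)·(1 + d(c)) / (2·√(1 − e^{−c})) − 1 − 3·√c | ≤ A·c. -/
set_option maxHeartbeats 1000000 in
/-- There exist `A > 0` and `c₀ > 0` such that for all `0 < c < c₀`, with `d = d(c)`
the unique positive solution of `(d+2)^2/(d+1) = 4·e^c`,
`| d(1+d)/(2√(1−e^{−c})) − 1 − 3√c | ≤ A·c`. -/
theorem slit_length_second_derivative_expansion :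
    ∃ A c₀ : ℝ, 0 < A ∧ 0 < c₀ ∧
      ∀ c d : ℝ, 0 < c → c < c₀ → 0 < d →
        (d + 2) ^ 2 / (d + 1) = 4 * Real.exp c →
        |d * (1 + d) / (2 * Real.sqrt (1 - Real.exp (-c))) - 1 - 3 * Real.sqrt c| ≤ A * c := by
  refine ⟨300, 1/2, by norm_num, by norm_num, ?_⟩
  intro c d hc hc1 hd heq
  set s := Real.exp c - 1 with hs
  have hel : c + 1 ≤ Real.exp c := Real.add_one_le_exp c
  have hec : 1 < Real.exp c := by linarith
  have heu : Real.exp c ≤ 1 + c + 2*c^2 := by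
    have h1 : -c + 1 ≤ Real.exp (-c) := Real.add_one_le_exp (-c)
    rw [Real.exp_neg] at h1
    have h2 : (-c + 1) * Real.exp c ≤ 1 := by
      rw [inv_eq_one_div] at h1
      exact (le_div_iff₀ (Real.exp_pos c)).mp h1
    nlinarith [Real.exp_pos c]
  have hs0 : 0 < s := by simp only [hs]; linarith
  have hsl : c ≤ s := by simp only [hs]; linarith
  have hsu : s ≤ c + 2*c^2 := by simp only [hs]; linarith
  have hd1 : (0:ℝ) < d + 1 := by linarith
  have hquad : d^2 = 4*s*(d+1) := by
    field_simp at heq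
    nlinarith [heq]
  set u := Real.sqrt s with hu
  have hu0 : 0 < u := Real.sqrt_pos.mpr hs0
  have hu2 : u^2 = s := Real.sq_sqrt hs0.le
  set v := Real.exp (c/2) with hv
  have hv0 : 0 < v := Real.exp_pos _
  have hv2 : v^2 = Real.exp c := by
    rw [hv, sq, ← Real.exp_add]; norm_num
  have hv2u : v^2 = u^2 + 1 := by rw [hv2, hu2, hs]; ring
  have hvu : u < v := by nlinarith
  have hquad' : (2*u*(u+v))^2 = 4*s*((2*u*(u+v))+1) := by
    rw [← hu2]; nlinarith [hv2u]
  have hfac : (d - 2*u*(u+v))*(d + 2*u*(u+v) - 4*s) = 0 := by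
    linear_combination hquad - hquad'
  have hdval : d = 2*u*(u+v) := by
    rcases mul_eq_zero.mp hfac with h | h
    · linarith
    · nlinarith [hu2]
  have hsq : Real.sqrt (1 - Real.exp (-c)) = u / v := by
    have h1 : 1 - Real.exp (-c) = (u/v)^2 := by
      rw [div_pow, hu2, hv2, Real.exp_neg]
      field_simp
      exact hs.symm
    rw [h1, Real.sqrt_sq (by positivity)]
  have key : d * (1 + d) / (2 * Real.sqrt (1 - Real.exp (-c))) = v * (u+v)^3 := by
    rw [hsq, hdval]
    field_simp
    linear_combination (-1) * hv2u
  rw [key]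
  clear hd hd1 hquad hquad' hfac hdval heq hsq key hv2 hel hec heu
  set w := Real.sqrt c with hw
  have hw0 : 0 < w := Real.sqrt_pos.mpr hc
  have hw2 : w^2 = c := Real.sq_sqrt hc.le
  have hwle : w ≤ 1 := by rw [hw]; exact Real.sqrt_le_one.mpr (by linarith)
  have hv1 : 1 ≤ v := by
    rw [hv, ← Real.exp_zero]; exact Real.exp_le_exp.mpr (by positivity)
  have hvle : v ≤ 1 + c := by
    have h1 : -(c/2) + 1 ≤ Real.exp (-(c/2)) := Real.add_one_le_exp _
    rw [Real.exp_neg, ← hv] at h1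
    have h2 : (-(c/2) + 1) * v ≤ 1 := by
      rw [inv_eq_one_div] at h1
      exact (le_div_iff₀ hv0).mp h1
    have h3 : (-(c/2) + 1) * v ≤ (-(c/2) + 1) * (1 + c) := by nlinarith
    exact le_of_mul_le_mul_left h3 (by linarith)
  have hule : u ≤ 1 := by rw [hu]; exact Real.sqrt_le_one.mpr (by nlinarith)
  have hwu : w ≤ u := by
    rw [hw, hu]; exact Real.sqrt_le_sqrt hsl
  have hcw : c ≤ w := by nlinarith [mul_le_mul_of_nonneg_left hwle hw0.le]
  have huwc : u ≤ w + c := by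
    have h1 : s ≤ (w+c)^2 := by nlinarith
    calc u ≤ Real.sqrt ((w+c)^2) := Real.sqrt_le_sqrt h1
    _ = w + c := Real.sqrt_sq (by positivity)
  clear_value u v w
  clear hs0 hu hv hw
  rw [abs_le]
  constructor
  · have h1 : (1+w)^3 ≤ (u+v)^3 := pow_le_pow_left₀ (by positivity) (by linarith) 3
    nlinarith [h1, mul_nonneg (by linarith : (0:ℝ) ≤ v - 1) (by positivity : (0:ℝ) ≤ (u+v)^3),
      sq_nonneg w, mul_nonneg hw0.le hw0.le]
  · have h2 : (u+v)^3 ≤ (1+w+2*c)^3 := pow_le_pow_left₀ (by positivity) (by linarith) 3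
    have h3 : v * (u+v)^3 ≤ (1+c) * (1+w+2*c)^3 :=
      mul_le_mul hvle h2 (by positivity) (by positivity)
    have key2 : (1+c) * (1+w+2*c)^3 ≤ 1 + 3*w + 300*c := by
      rw [← hw2]
      nlinarith [pow_le_pow_of_le_one hw0.le hwle (by norm_num : 2 ≤ 3),
        pow_le_pow_of_le_one hw0.le hwle (by norm_num : 2 ≤ 4),
        pow_le_pow_of_le_one hw0.le hwle (by norm_num : 2 ≤ 5),
        pow_le_pow_of_le_one hw0.le hwle (by norm_num : 2 ≤ 6),
        pow_le_pow_of_le_one hw0.le hwle (by norm_num : 2 ≤ 7),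
        pow_le_pow_of_le_one hw0.le hwle (by norm_num : 2 ≤ 8)]
    linarith
end

section
/- Let r, θ be real numbers, let c > 0, and set w = exp(r + iθ) ∈ ℂ. Then |w − 1|² < |(w+1)² − 4·e^c·w| if and only if (cosh r)·(cos θ) < e^c. -/
/-- Let `r, θ` be real, `c > 0`, `w = exp(r + iθ)`.  Then
`|w − 1|² < |(w+1)² − 4·e^c·w|` iff `cosh r · cos θ < e^c`. -/
theorem slit_inverse_derivative_modulus_criterion
    (r θ c : ℝ) (hc : 0 < c) (w : ℂ)
    (hw : w = Complex.exp ((r : ℂ) + (θ : ℂ) * Complex.I)) :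
    ‖w - 1‖ ^ 2 < ‖(w + 1) ^ 2 - 4 * (Real.exp c : ℂ) * w‖ ↔
      Real.cosh r * Real.cos θ < Real.exp c := by
  subst hw
  have hE : 1 < Real.exp c := by
    rw [← Real.exp_zero]; exact Real.exp_lt_exp.mpr hc
  set z := (Complex.exp ((r : ℂ) + (θ : ℂ) * Complex.I) + 1) ^ 2 -
      4 * (Real.exp c : ℂ) * Complex.exp ((r : ℂ) + (θ : ℂ) * Complex.I) with hz
  rw [show ‖Complex.exp ((r : ℂ) + (θ : ℂ) * Complex.I) - 1‖ ^ 2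
      = Complex.normSq (Complex.exp ((r : ℂ) + (θ : ℂ) * Complex.I) - 1) from Complex.sq_norm _]
  rw [show Complex.normSq (Complex.exp ((r : ℂ) + (θ : ℂ) * Complex.I) - 1) < ‖z‖
      ↔ Complex.normSq (Complex.exp ((r : ℂ) + (θ : ℂ) * Complex.I) - 1) ^ 2 < ‖z‖ ^ 2
      from (pow_lt_pow_iff_left₀ (Complex.normSq_nonneg _) (norm_nonneg _) (by norm_num)).symm]
  rw [Complex.sq_norm]
  rw [Complex.normSq_apply, Complex.normSq_apply, hz]
  simp only [Complex.sub_re, Complex.sub_im, Complex.add_re, Complex.add_im, Complex.one_re,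
    Complex.one_im, Complex.mul_re, Complex.mul_im, Complex.ofReal_re, Complex.ofReal_im,
    Complex.exp_re, Complex.exp_im, Complex.add_im, Complex.I_re, Complex.I_im,
    Complex.re_ofNat, Complex.im_ofNat, pow_two]
  ring_nf
  have hRpos : 0 < Real.exp r := Real.exp_pos r
  have h2 : 0 < Real.exp c - 1 := by linarith
  have hcosh : 2 * Real.exp r * Real.cosh r = Real.exp r ^ 2 + 1 := by
    rw [Real.cosh_eq, Real.exp_neg]; field_simp
  have hs := Real.sin_sq_add_cos_sq θ
  have h16 : 0 < 16 * Real.exp r ^ 2 * (Real.exp c - 1) := by positivity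
  have key :
      (1 + (Real.exp r * Real.cos θ * 4 - Real.exp r * Real.cos θ * Real.exp c * 8) +
          (Real.exp r ^ 2 * Real.cos θ ^ 2 * 6 - Real.exp r ^ 2 * Real.cos θ ^ 2 * Real.exp c * 16) +
          Real.exp r ^ 2 * Real.cos θ ^ 2 * Real.exp c ^ 2 * 16 +
          (Real.exp r ^ 2 * Real.sin θ ^ 2 * 2 - Real.exp r ^ 2 * Real.sin θ ^ 2 * Real.exp c * 16) +
          Real.exp r ^ 2 * Real.sin θ ^ 2 * Real.exp c ^ 2 * 16 +
          (Real.exp r ^ 3 * Real.cos θ * Real.sin θ ^ 2 * 4 -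
            Real.exp r ^ 3 * Real.cos θ * Real.sin θ ^ 2 * Real.exp c * 8) +
          (Real.exp r ^ 3 * Real.cos θ ^ 3 * 4 - Real.exp r ^ 3 * Real.cos θ ^ 3 * Real.exp c * 8) +
          Real.exp r ^ 4 * Real.cos θ ^ 2 * Real.sin θ ^ 2 * 2 +
          Real.exp r ^ 4 * Real.cos θ ^ 4 +
          Real.exp r ^ 4 * Real.sin θ ^ 4)
      - (1 - Real.exp r * Real.cos θ * 4 + Real.exp r ^ 2 * Real.cos θ ^ 2 * 6 +
          Real.exp r ^ 2 * Real.sin θ ^ 2 * 2 +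
          (-(Real.exp r ^ 3 * Real.cos θ * Real.sin θ ^ 2 * 4) - Real.exp r ^ 3 * Real.cos θ ^ 3 * 4) +
          Real.exp r ^ 4 * Real.cos θ ^ 2 * Real.sin θ ^ 2 * 2 +
          Real.exp r ^ 4 * Real.cos θ ^ 4 +
          Real.exp r ^ 4 * Real.sin θ ^ 4)
      = 16 * Real.exp r ^ 2 * (Real.exp c - 1) * (Real.exp c - Real.cos θ * Real.cosh r) := by
    linear_combination
      (8 * Real.exp r * (Real.exp c - 1) *
        (2 * Real.exp r * Real.exp c - Real.exp r ^ 2 * Real.cos θ)) * hs +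
      (8 * Real.exp r * (Real.exp c - 1) * Real.cos θ) * hcosh
  constructor
  · intro h
    by_contra hcon
    push_neg at hcon
    nlinarith [key, h16, h]
  · intro h
    have hpos : 0 < 16 * Real.exp r ^ 2 * (Real.exp c - 1) * (Real.exp c - Real.cos θ * Real.cosh r) :=
      mul_pos h16 (by linarith)
    linarith [key]
end

section
/- Let ξ ∈ ℂ with ξ ≠ 0, and let Φ be analytic on an open neighbourhood of ξ with Φ'(ξ) = 0. Define q(z) = Φ'(z)·z·(z+ξ)/(z−ξ) for z ≠ ξ near ξ. Then q extends to an analytic function on a neighbourhood of ξ, and for every natural number m ≥ 0, the limit of the m-th derivative q^{(m)}(z) as z → ξ (z ≠ ξ) exists and equals m·Φ^{(m)}(ξ) + 3·ξ·Φ^{(m+1)}(ξ) + (2·ξ²/(m+1))·Φ^{(m+2)}(ξ). -/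
open Filter Topology

private lemma aux_analyticAt_deriv {f : ℂ → ℂ} {x : ℂ} (h : AnalyticAt ℂ f x) :
    AnalyticAt ℂ (deriv f) x := by
  obtain ⟨s, hs, hfs⟩ := h.exists_mem_nhds_analyticOnNhd
  exact hfs.deriv x (mem_of_mem_nhds hs)

private lemma aux_analyticAt_iteratedDeriv {f : ℂ → ℂ} {x : ℂ} (h : AnalyticAt ℂ f x) (n : ℕ) :
    AnalyticAt ℂ (iteratedDeriv n f) x := by
  induction n generalizing f with
  | zero => simpa [iteratedDeriv_zero] using h
  | succ n ih =>
    rw [iteratedDeriv_succ']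
    exact ih (aux_analyticAt_deriv h)

private lemma aux_analyticAt_dslope {f : ℂ → ℂ} {x : ℂ} (h : AnalyticAt ℂ f x) :
    AnalyticAt ℂ (dslope f x) x := by
  obtain ⟨p, hp⟩ := h
  exact hp.has_fpower_series_dslope_fslope.analyticAt

/-- Key Leibniz-type lemma for a linear factor. -/
private lemma aux_lin_factor {h : ℂ → ℂ} {x : ℂ} (hh : AnalyticAt ℂ h x) (a : ℂ) (n : ℕ) :
    ∀ᶠ z in 𝓝 x, iteratedDeriv n (fun w => (w - a) * h w) z
      = (z - a) * iteratedDeriv n h z + (n : ℂ) * iteratedDeriv (n - 1) h z := by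
  induction n with
  | zero =>
    filter_upwards with z
    simp [iteratedDeriv_zero]
  | succ n ih =>
    have hev : (fun z => iteratedDeriv n (fun w => (w - a) * h w) z) =ᶠ[𝓝 x]
        (fun z => (z - a) * iteratedDeriv n h z + (n : ℂ) * iteratedDeriv (n - 1) h z) := ih
    have hd := hev.deriv
    filter_upwards [hd, hh.eventually_analyticAt] with z hz hz'
    have hG : AnalyticAt ℂ (iteratedDeriv n h) z := aux_analyticAt_iteratedDeriv hz' n
    have hH : AnalyticAt ℂ (iteratedDeriv (n - 1) h) z := aux_analyticAt_iteratedDeriv hz' (n - 1)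
    have h1 : DifferentiableAt ℂ (fun z : ℂ => (z - a) * iteratedDeriv n h z) z :=
      ((differentiableAt_fun_id.sub_const a)).mul hG.differentiableAt
    have h2 : DifferentiableAt ℂ (fun z : ℂ => (n : ℂ) * iteratedDeriv (n - 1) h z) z :=
      hH.differentiableAt.const_mul _
    rw [iteratedDeriv_succ, hz, deriv_fun_add h1 h2,
      deriv_fun_mul ((differentiableAt_fun_id.sub_const a)) hG.differentiableAt,
      deriv_const_mul _ hH.differentiableAt]
    have e1 : deriv (fun z : ℂ => z - a) z = 1 := by
      simp [deriv_sub_const]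
    have e2 : deriv (iteratedDeriv n h) z = iteratedDeriv (n + 1) h z := by
      rw [← iteratedDeriv_succ]
    rw [e1, e2]
    have e3 : iteratedDeriv n h z + (n : ℂ) * deriv (iteratedDeriv (n - 1) h) z
        = ((n : ℂ) + 1) * iteratedDeriv n h z := by
      cases n with
      | zero => simp
      | succ k =>
        have : deriv (iteratedDeriv (k + 1 - 1) h) z = iteratedDeriv (k + 1) h z := by
          simp only [Nat.add_sub_cancel]
          rw [← iteratedDeriv_succ]
        rw [this]
        push_cast
        ring
    push_cast
    calc 1 * iteratedDeriv n h z + (z - a) * iteratedDeriv (n + 1) h z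
        + (n : ℂ) * deriv (iteratedDeriv (n - 1) h) z
        = (z - a) * iteratedDeriv (n + 1) h z
          + (iteratedDeriv n h z + (n : ℂ) * deriv (iteratedDeriv (n - 1) h) z) := by ring
      _ = (z - a) * iteratedDeriv (n + 1) h z + ((n : ℂ) + 1) * iteratedDeriv n h z := by rw [e3]

/-- Let `ξ ≠ 0` and `Φ` analytic near `ξ` with `Φ'(ξ) = 0`.  Define
`q(z) = Φ'(z)·z·(z+ξ)/(z−ξ)` for `z ≠ ξ`.  Then `q` extends analytically to a
neighbourhood of `ξ`, and for every `m ≥ 0` the limit of `q⁽ᵐ⁾(z)` as `z → ξ`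
(`z ≠ ξ`) exists and equals
`m·Φ⁽ᵐ⁾(ξ) + 3ξ·Φ⁽ᵐ⁺¹⁾(ξ) + (2ξ²/(m+1))·Φ⁽ᵐ⁺²⁾(ξ)`. -/
theorem loewner_vector_field_derivatives_at_singularity
    (ξ : ℂ) (hξ : ξ ≠ 0) (Φ : ℂ → ℂ) (hΦ : AnalyticAt ℂ Φ ξ)
    (hΦ' : deriv Φ ξ = 0) (q : ℂ → ℂ)
    (hq : ∀ z : ℂ, z ≠ ξ → q z = deriv Φ z * z * (z + ξ) / (z - ξ)) :
    (∃ Q : ℂ → ℂ, AnalyticAt ℂ Q ξ ∧ ∀ᶠ z in nhdsWithin ξ {ξ}ᶜ, Q z = q z) ∧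
    ∀ m : ℕ,
      Filter.Tendsto (fun z : ℂ => iteratedDeriv m q z) (nhdsWithin ξ {ξ}ᶜ)
        (nhds ((m : ℂ) * iteratedDeriv m Φ ξ
          + 3 * ξ * iteratedDeriv (m + 1) Φ ξ
          + (2 * ξ ^ 2 / ((m : ℂ) + 1)) * iteratedDeriv (m + 2) Φ ξ)) := by
  have hf : AnalyticAt ℂ (deriv Φ) ξ := aux_analyticAt_deriv hΦ
  set f : ℂ → ℂ := deriv Φ with hfdef
  set g : ℂ → ℂ := dslope f ξ with hgdef
  have hg : AnalyticAt ℂ g ξ := aux_analyticAt_dslope hf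
  have hfg : ∀ z, f z = (z - ξ) * g z := by
    intro z
    have h1 := sub_smul_dslope f ξ z
    rw [smul_eq_mul, hΦ', sub_zero] at h1
    exact h1.symm
  set Q : ℂ → ℂ := fun z => (z - 0) * ((z - (-ξ)) * g z) with hQdef
  have hQ : AnalyticAt ℂ Q ξ :=
    ((analyticAt_id.sub analyticAt_const).mul
      ((analyticAt_id.sub analyticAt_const).mul hg))
  have hqQ : ∀ z, z ≠ ξ → Q z = q z := by
    intro z hz
    have hzξ : z - ξ ≠ 0 := sub_ne_zero.mpr hz
    rw [hq z hz, hfg z]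
    field_simp
    ring
  -- iterated derivatives of f vs Φ
  have hfΦ : ∀ k : ℕ, iteratedDeriv k f ξ = iteratedDeriv (k + 1) Φ ξ := by
    intro k
    rw [iteratedDeriv_succ']
  -- P = (z - ξ) * Q z
  set P : ℂ → ℂ := fun z => (z - ξ) * Q z with hPdef
  set h₁ : ℂ → ℂ := fun z => (z - (-ξ)) * f z with hh₁def
  have hh₁ : AnalyticAt ℂ h₁ ξ := (analyticAt_id.sub analyticAt_const).mul hf
  have hP2 : P = fun z => (z - 0) * h₁ z := by
    funext z
    simp only [hPdef, hQdef, hh₁def]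
    rw [hfg z]
    ring
  have hm1 : ∀ m : ℕ, ((m : ℂ) + 1) ≠ 0 := fun m => Nat.cast_add_one_ne_zero m
  -- value of iteratedDeriv m Q at ξ
  have key : ∀ m : ℕ, iteratedDeriv m Q ξ = (m : ℂ) * iteratedDeriv m Φ ξ
      + 3 * ξ * iteratedDeriv (m + 1) Φ ξ
      + (2 * ξ ^ 2 / ((m : ℂ) + 1)) * iteratedDeriv (m + 2) Φ ξ := by
    intro m
    -- way 1: P = (· - ξ) * Q
    have w1 : iteratedDeriv (m + 1) P ξ = ((m : ℂ) + 1) * iteratedDeriv m Q ξ := by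
      have h := (aux_lin_factor hQ ξ (m + 1)).self_of_nhds
      simp only [Nat.add_sub_cancel] at h
      rw [hPdef, h, sub_self, zero_mul, zero_add]
      push_cast
      ring
    -- way 2: P = (· - 0) * h₁
    have w2 : iteratedDeriv (m + 1) P ξ
        = ξ * iteratedDeriv (m + 1) h₁ ξ + ((m : ℂ) + 1) * iteratedDeriv m h₁ ξ := by
      have h := (aux_lin_factor hh₁ 0 (m + 1)).self_of_nhds
      simp only [Nat.add_sub_cancel] at h
      rw [hP2, h, sub_zero]
      push_cast
      ring
    -- derivatives of h₁ in terms of f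
    have e1 : iteratedDeriv (m + 1) h₁ ξ
        = 2 * ξ * iteratedDeriv (m + 2) Φ ξ + ((m : ℂ) + 1) * iteratedDeriv (m + 1) Φ ξ := by
      have h := (aux_lin_factor hf (-ξ) (m + 1)).self_of_nhds
      simp only [Nat.add_sub_cancel] at h
      rw [hh₁def, h, hfΦ (m + 1), hfΦ m, show m + 1 + 1 = m + 2 from rfl, sub_neg_eq_add]
      push_cast
      ring
    have e2 : iteratedDeriv m h₁ ξ
        = 2 * ξ * iteratedDeriv (m + 1) Φ ξ + (m : ℂ) * iteratedDeriv m Φ ξ := by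
      have h := (aux_lin_factor hf (-ξ) m).self_of_nhds
      rw [hh₁def, h, hfΦ m, sub_neg_eq_add]
      have : (m : ℂ) * iteratedDeriv (m - 1) f ξ = (m : ℂ) * iteratedDeriv m Φ ξ := by
        cases m with
        | zero => simp
        | succ k =>
          simp only [Nat.add_sub_cancel]
          rw [hfΦ k]
      rw [this]
      ring
    have hmain : ((m : ℂ) + 1) * iteratedDeriv m Q ξ
        = ((m : ℂ) + 1) * ((m : ℂ) * iteratedDeriv m Φ ξ
          + 3 * ξ * iteratedDeriv (m + 1) Φ ξ
          + (2 * ξ ^ 2 / ((m : ℂ) + 1)) * iteratedDeriv (m + 2) Φ ξ) := by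
      have hne : ((m : ℂ) + 1) ≠ 0 := hm1 m
      rw [← w1, w2, e1, e2]
      field_simp
      ring
    exact mul_left_cancel₀ (hm1 m) hmain
  constructor
  · refine ⟨Q, hQ, ?_⟩
    filter_upwards [self_mem_nhdsWithin] with z hz
    exact hqQ z hz
  · intro m
    have heq : Set.EqOn (iteratedDeriv m q) (iteratedDeriv m Q) {ξ}ᶜ := by
      apply Set.EqOn.iteratedDeriv_of_isOpen _ isOpen_compl_singleton
      intro z hz
      exact (hqQ z hz).symm
    have hc : ContinuousAt (iteratedDeriv m Q) ξ :=
      (aux_analyticAt_iteratedDeriv hQ m).continuousAt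
    have ht : Filter.Tendsto (iteratedDeriv m Q) (nhdsWithin ξ {ξ}ᶜ)
        (nhds (iteratedDeriv m Q ξ)) :=
      (hc.continuousWithinAt).tendsto
    rw [key m] at ht
    apply ht.congr'
    filter_upwards [self_mem_nhdsWithin] with z hz
    exact (heq hz).symm
end

section
/- For every c ∈ (0,1), every normalized exterior slit map f of capacity c with associated β = β_c, and every z ∈ Δ, one has |f'(z)| = (|f(z)|/|z|) · |z − 1| / ( |z − e^{iβ}|^{1/2} · |z − e^{−iβ}|^{1/2} ). -/
/-- The exterior unit disc `Δ = {z : |z| > 1}`. -/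
def ExtDisc : Set ℂ := {z : ℂ | 1 < ‖z‖}

/-- A normalized exterior slit map of capacity `c` (with slit length `d`): a function
holomorphic and injective on `Δ`, with image `Δ` minus the radial slit `(1, 1+d]`,
satisfying `f(z)/z → e^c` as `|z| → ∞`, and continuous on `{|z| ≥ 1}` (we regard `f`
as its continuous extension to the closed exterior disc). -/
def IsSlitMap (c d : ℝ) (f : ℂ → ℂ) : Prop :=
  ContinuousOn f {z : ℂ | 1 ≤ ‖z‖} ∧
  DifferentiableOn ℂ f ExtDisc ∧
  Set.InjOn f ExtDisc ∧
  f '' ExtDisc = ExtDisc \ {w : ℂ | ∃ x : ℝ, 1 < x ∧ x ≤ 1 + d ∧ w = (x : ℂ)} ∧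
  Filter.Tendsto (fun z : ℂ => f z / z) (Filter.comap (fun z : ℂ => ‖z‖) Filter.atTop)
    (nhds ((Real.exp c : ℝ) : ℂ))

open Complex Set Metric Filter Topology

noncomputable def zetam (ec w : ℂ) : ℂ := (w + w⁻¹ - (2 * ec - 2)) / ec


def seg2 : Set ℂ := {w : ℂ | ∃ t : ℝ, -2 ≤ t ∧ t ≤ 2 ∧ w = (t : ℂ)}

noncomputable def sqb (w : ℂ) : ℂ := (1 - 4 / w ^ 2) ^ ((1 : ℂ)/2)

noncomputable def kmap (w : ℂ) : ℂ := w * (1 + sqb w) / 2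

lemma seg2_ne_zero {w : ℂ} (hw : w ∉ seg2) : w ≠ 0 := by
  rintro rfl; exact hw ⟨0, by norm_num⟩

lemma seg2_slit {w : ℂ} (hw : w ∉ seg2) : (1 - 4 / w ^ 2) ∈ slitPlane := by
  rw [mem_slitPlane_iff]
  by_contra h
  push_neg at h
  obtain ⟨hre, him⟩ := h
  have hw0 : w ≠ 0 := seg2_ne_zero hw
  have hw2 : w ^ 2 ≠ 0 := pow_ne_zero _ hw0
  set v : ℂ := 4 / w ^ 2 with hv
  have hvim : v.im = 0 := by
    have : (1 - v).im = 0 := him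
    simpa using this
  have hvre : 1 ≤ v.re := by
    have : (1 - v).re ≤ 0 := hre
    simp [Complex.sub_re] at this
    linarith
  have hveq : w ^ 2 * (v.re : ℂ) = 4 := by
    have hv' : v = (v.re : ℂ) := Complex.ext rfl (by simp [hvim])
    rw [← hv', hv]
    field_simp
  have h1 : (w.re * w.re - w.im * w.im) * v.re = 4 := by
    have := congrArg Complex.re hveq
    simpa [pow_two, Complex.mul_re, Complex.mul_im] using this
  have h2 : (w.re * w.im + w.im * w.re) * v.re = 0 := by
    have := congrArg Complex.im hveq
    simpa [pow_two, Complex.mul_re, Complex.mul_im] using this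
  have hxy : w.re * w.im = 0 := by nlinarith
  have hy0 : w.im = 0 := by
    rcases mul_eq_zero.mp hxy with h | h
    · exfalso; rw [h] at h1
      nlinarith [mul_nonneg (mul_self_nonneg w.im) (le_trans zero_le_one hvre)]
    · exact h
  have hx2 : w.re * w.re * v.re = 4 := by nlinarith
  have hb : -2 ≤ w.re ∧ w.re ≤ 2 := by constructor <;> nlinarith
  exact hw ⟨w.re, hb.1, hb.2, Complex.ext rfl (by simp [hy0])⟩

lemma seg2_base_ne {w : ℂ} (hw : w ∉ seg2) : (1 - 4 / w ^ 2) ≠ 0 := by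
  intro h
  have hw0 : w ≠ 0 := seg2_ne_zero hw
  have hw2' : w ^ 2 ≠ 0 := pow_ne_zero _ hw0
  have hw2 : w ^ 2 = 4 := by
    field_simp at h
    linear_combination h
  have hfac : (w - 2) * (w + 2) = 0 := by linear_combination hw2
  rcases mul_eq_zero.mp hfac with h' | h'
  · exact hw ⟨2, by norm_num, by norm_num, by push_cast; linear_combination h'⟩
  · exact hw ⟨-2, by norm_num, by norm_num, by push_cast; linear_combination h'⟩

lemma sqb_sq {w : ℂ} (hw : w ∉ seg2) : sqb w ^ 2 = 1 - 4 / w ^ 2 := by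
  have h0 := seg2_base_ne hw
  rw [sqb, sq, ← Complex.cpow_add _ _ h0]
  norm_num

lemma sqb_re_pos {w : ℂ} (hw : w ∉ seg2) : 0 < (sqb w).re := by
  have h0 := seg2_base_ne hw
  have hsl := seg2_slit hw
  rw [sqb, Complex.cpow_def_of_ne_zero h0, Complex.exp_re]
  have harg : |Complex.arg (1 - 4 / w ^ 2)| < Real.pi := by
    rw [abs_lt]
    refine ⟨Complex.neg_pi_lt_arg _, ?_⟩
    apply Complex.arg_lt_pi_iff.mpr
    rw [mem_slitPlane_iff] at hsl
    rcases hsl with h | h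
    · exact Or.inl h.le
    · exact Or.inr h
  have him : (Complex.log (1 - 4 / w ^ 2) * ((1:ℂ)/2)).im
      = Complex.arg (1 - 4 / w ^ 2) / 2 := by
    rw [Complex.mul_im]
    norm_num [Complex.log_im]
    ring
  rw [him]
  have hcos : 0 < Real.cos (Complex.arg (1 - 4 / w ^ 2) / 2) := by
    apply Real.cos_pos_of_mem_Ioo
    rw [abs_lt] at harg
    constructor
    · linarith [harg.1, Real.pi_pos]
    · linarith [harg.2, Real.pi_pos]
  positivity

lemma kmap_mul_inv {w : ℂ} (hw : w ∉ seg2) : kmap w * (w * (1 - sqb w) / 2) = 1 := by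
  have h := sqb_sq hw
  have hw0 := seg2_ne_zero hw
  have hw2 : w ^ 2 ≠ 0 := pow_ne_zero _ hw0
  have h' : w ^ 2 * sqb w ^ 2 = w ^ 2 - 4 := by
    field_simp at h
    linear_combination h
  rw [kmap]
  field_simp
  linear_combination -h'

lemma kmap_ne_zero {w : ℂ} (hw : w ∉ seg2) : kmap w ≠ 0 := by
  intro h
  have := kmap_mul_inv hw
  rw [h, zero_mul] at this
  exact zero_ne_one this

lemma kmap_inv {w : ℂ} (hw : w ∉ seg2) : (kmap w)⁻¹ = w * (1 - sqb w) / 2 :=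
  inv_eq_of_mul_eq_one_right (kmap_mul_inv hw)

lemma kmap_add_inv {w : ℂ} (hw : w ∉ seg2) : kmap w + (kmap w)⁻¹ = w := by
  rw [kmap_inv hw, kmap]; ring

lemma kmap_abs_gt_one {w : ℂ} (hw : w ∉ seg2) : 1 < ‖kmap w‖ := by
  have hre := sqb_re_pos hw
  have hw0 := seg2_ne_zero hw
  have habs : ‖1 - sqb w‖ < ‖1 + sqb w‖ := by
    have h1 : ‖1 - sqb w‖ ^ 2 < ‖1 + sqb w‖ ^ 2 := by
      rw [Complex.sq_norm, Complex.sq_norm, Complex.normSq_apply, Complex.normSq_apply]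
      simp only [Complex.add_re, Complex.add_im, Complex.sub_re, Complex.sub_im,
        Complex.one_re, Complex.one_im]
      nlinarith
    have h2 : (0:ℝ) ≤ ‖1 - sqb w‖ := norm_nonneg _
    have h3 : (0:ℝ) ≤ ‖1 + sqb w‖ := norm_nonneg _
    nlinarith
  have hprod : ‖kmap w‖ * ‖w * (1 - sqb w) / 2‖ = 1 := by
    rw [← norm_mul, kmap_mul_inv hw, norm_one]
  have hawpos : 0 < ‖w‖ := norm_pos_iff.mpr hw0
  have habs2 : ‖(2:ℂ)‖ = 2 := by norm_num
  have hK : ‖kmap w‖ = ‖w‖ * ‖1 + sqb w‖ / 2 := by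
    rw [kmap, norm_div, norm_mul, habs2]
  have hX : ‖w * (1 - sqb w) / 2‖ = ‖w‖ * ‖1 - sqb w‖ / 2 := by
    rw [norm_div, norm_mul, habs2]
  rw [hK] at hprod ⊢
  rw [hX] at hprod
  set m := ‖w‖ * ‖1 + sqb w‖ / 2 with hm
  set m' := ‖w‖ * ‖1 - sqb w‖ / 2 with hm'
  have hlt : m' < m := by
    have := mul_lt_mul_of_pos_left habs hawpos
    rw [hm, hm']; linarith
  have hm0 : 0 ≤ m' := by
    rw [hm']; positivity
  have hm'pos : 0 < m' := by
    rcases lt_or_eq_of_le hm0 with h | h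
    · exact h
    · exfalso; rw [← h] at hprod; simp at hprod
  have hmpos : 0 < m := lt_trans hm'pos hlt
  by_contra hcon
  push_neg at hcon
  have A : m * m' < m * m := mul_lt_mul_of_pos_left hlt hmpos
  have B : m * m ≤ m * 1 := mul_le_mul_of_nonneg_left hcon hmpos.le
  rw [mul_one] at B
  linarith

lemma kmap_differentiableAt {w : ℂ} (hw : w ∉ seg2) : DifferentiableAt ℂ kmap w := by
  have hw0 := seg2_ne_zero hw
  have hbase : DifferentiableAt ℂ (fun w : ℂ => 1 - 4 / w ^ 2) w :=
    (differentiableAt_const _).sub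
      ((differentiableAt_const _).div (differentiableAt_pow 2) (pow_ne_zero _ hw0))
  have hsqb : DifferentiableAt ℂ sqb w :=
    hbase.cpow (differentiableAt_const _) (seg2_slit hw)
  have : DifferentiableAt ℂ (fun w : ℂ => w * (1 + sqb w) / 2) w :=
    (differentiableAt_id.mul ((differentiableAt_const _).add hsqb)).div_const 2
  exact this


lemma zeta_notin_seg2 {d cE : ℝ} (hd0 : 0 < d)
    (hdc : (d + 2) ^ 2 / (d + 1) = 4 * Real.exp cE) {w : ℂ}
    (hw1 : 1 < ‖w‖)
    (hws : ¬∃ x : ℝ, 1 < x ∧ x ≤ 1 + d ∧ w = (x : ℂ)) :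
    zetam ((Real.exp cE : ℝ) : ℂ) w ∉ seg2 := by
  set E := Real.exp cE with hE
  have hE0 : (0:ℝ) < E := Real.exp_pos _
  have hd1 : (0:ℝ) < d + 1 := by linarith
  have hdc' : (d + 2) ^ 2 = 4 * E * (d + 1) := by
    field_simp at hdc; linarith [hdc]
  rintro ⟨t, ht1, ht2, hteq⟩
  have hw0 : w ≠ 0 := by
    intro h; rw [h] at hw1; simp at hw1; linarith
  set s : ℝ := E * t + 2 * E - 2 with hs
  have hw0i : w * w⁻¹ = 1 := mul_inv_cancel₀ hw0
  have hsum : w + w⁻¹ = ((s : ℝ) : ℂ) := by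
    have hec0 : ((E : ℝ) : ℂ) ≠ 0 := by exact_mod_cast ne_of_gt hE0
    rw [zetam] at hteq
    field_simp at hteq
    push_cast
    have hsC : ((s:ℝ):ℂ) = ((E:ℝ):ℂ)*((t:ℝ):ℂ) + 2*((E:ℝ):ℂ) - 2 := by
      rw [hs]; push_cast; ring
    linear_combination -hsC + (w⁻¹) * hteq + (2*((E:ℝ):ℂ) - 2 + ((t:ℝ):ℂ)*((E:ℝ):ℂ) - w) * hw0i
  have hs_lb : -2 ≤ s := by nlinarith
  have hs_ub : s ≤ 4 * E - 2 := by nlinarith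
  have hquad : w ^ 2 - (s : ℂ) * w + 1 = 0 := by
    have := hsum
    field_simp at this
    linear_combination this
  -- w is real
  have hconj : (starRingEnd ℂ w) ^ 2 - (s : ℂ) * (starRingEnd ℂ w) + 1 = 0 := by
    have := congrArg (starRingEnd ℂ) hquad
    simpa [map_pow, map_mul, Complex.conj_ofReal] using this
  have him : w.im = 0 := by
    by_contra him
    have hne : w - starRingEnd ℂ w ≠ 0 := by
      intro h
      have : starRingEnd ℂ w = w := by linear_combination -h
      rw [Complex.conj_eq_iff_im] at this
      exact him this
    have hfac : (w - starRingEnd ℂ w) * (w + starRingEnd ℂ w - (s:ℂ)) = 0 := by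
      linear_combination hquad - hconj
    have hsum2 : w + starRingEnd ℂ w - (s:ℂ) = 0 := by
      rcases mul_eq_zero.mp hfac with h | h
      · exact absurd h hne
      · exact h
    have hprod : w * starRingEnd ℂ w = 1 := by
      linear_combination -hquad + w * hsum2
    rw [Complex.mul_conj] at hprod
    have : Complex.normSq w = 1 := by exact_mod_cast hprod
    have : ‖w‖ = 1 := by
      rw [← Complex.sq_norm] at this
      nlinarith [norm_nonneg w]
    linarith
  set x := w.re with hxdef
  have hwx : w = ((x : ℝ) : ℂ) := Complex.ext rfl (by simpa using him)
  have habs : ‖w‖ = |x| := by rw [hwx]; simp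
  have hx1 : 1 < |x| := by rw [← habs]; exact hw1
  have hquadR : x ^ 2 - s * x + 1 = 0 := by
    rw [hwx] at hquad
    have h2 : ((x ^ 2 - s * x + 1 : ℝ) : ℂ) = 0 := by push_cast; linear_combination hquad
    exact_mod_cast h2
  rcases lt_abs.mp hx1 with hx | hx
  · -- x > 1 : then x > 1 + d by hws, contradiction with hs_ub
    have hxd : 1 + d < x := by
      by_contra hle
      push_neg at hle
      exact hws ⟨x, hx, hle, hwx⟩
    have hx0 : (0:ℝ) < x := by linarith
    have hpos1 : (0:ℝ) < x - (1 + d) := by linarith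
    have hpos2 : (0:ℝ) < (d + 1) * x - 1 := by nlinarith
    nlinarith [mul_pos hpos1 hpos2, hquadR, hs_ub, hdc', hx0]
  · -- -x > 1, i.e. x < -1
    have hx' : x < -1 := by linarith
    nlinarith [sq_nonneg (x + 1), hquadR, hs_lb]


lemma tendsto_inv_comapAbs : Tendsto (fun w : ℂ => w⁻¹) (comap (fun z : ℂ => ‖z‖) atTop) (𝓝 0) := by
  rw [tendsto_zero_iff_norm_tendsto_zero]
  have t0 : Tendsto (fun z : ℂ => ‖z‖) (comap (fun z : ℂ => ‖z‖) atTop) atTop := tendsto_comap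
  exact t0.inv_tendsto_atTop.congr (fun x => (norm_inv x).symm)

lemma kmap_div_tendsto :
    Tendsto (fun w : ℂ => kmap w / w) (comap (fun z : ℂ => ‖z‖) atTop) (𝓝 1) := by
  have t0 : Tendsto (fun z : ℂ => ‖z‖) (comap (fun z : ℂ => ‖z‖) atTop) atTop := tendsto_comap
  have hev : ∀ᶠ w : ℂ in comap (fun z : ℂ => ‖z‖) atTop, 1 < ‖w‖ :=
    t0.eventually (eventually_gt_atTop 1)
  have tbase : Tendsto (fun w : ℂ => 1 - 4 / w ^ 2) (comap (fun z : ℂ => ‖z‖) atTop) (𝓝 1) := by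
    have h := (tendsto_const_nhds (x := (1:ℂ))).sub
      (((tendsto_const_nhds (x := (4:ℂ))).mul
        (tendsto_inv_comapAbs.mul tendsto_inv_comapAbs)))
    simp only [mul_zero, zero_mul, sub_zero] at h
    apply h.congr
    intro w
    rw [pow_two]
    ring
  have tsqb : Tendsto sqb (comap (fun z : ℂ => ‖z‖) atTop) (𝓝 1) := by
    have hc : ContinuousAt (fun z : ℂ => z ^ ((1:ℂ)/2)) 1 :=
      continuousAt_cpow_const (by simp [Complex.mem_slitPlane_iff])
    have := hc.tendsto.comp tbase
    rw [show (𝓝 (1:ℂ)) = 𝓝 ((1:ℂ) ^ ((1:ℂ)/2)) by rw [Complex.one_cpow]]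
    exact this
  have h2 : Tendsto (fun w : ℂ => (1 + sqb w) / 2) (comap (fun z : ℂ => ‖z‖) atTop) (𝓝 1) := by
    have := ((tendsto_const_nhds (x := (1:ℂ))).add tsqb).div_const 2
    rw [show ((1:ℂ) + 1) / 2 = 1 by norm_num] at this
    exact this
  apply h2.congr'
  filter_upwards [hev] with w hw
  have hw0 : w ≠ 0 := by
    intro h; rw [h] at hw; simp at hw; linarith
  rw [kmap]
  field_simp

lemma extDisc_open : IsOpen ExtDisc := isOpen_lt continuous_const continuous_norm

lemma FE_lemma {c d : ℝ} {f : ℂ → ℂ} (hd0 : 0 < d)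
    (hdc : (d + 2) ^ 2 / (d + 1) = 4 * Real.exp c) (hf : IsSlitMap c d f) :
    ∀ z ∈ ExtDisc, f z + (f z)⁻¹ =
      ((Real.exp c : ℝ) : ℂ) * (z + z⁻¹) + (2 * ((Real.exp c : ℝ) : ℂ) - 2) := by
  obtain ⟨hcont, hdiff, hinj, himage, hlim⟩ := hf
  set E : ℝ := Real.exp c with hE
  have hE0 : (0:ℝ) < E := Real.exp_pos _
  have hec0 : ((E : ℝ) : ℂ) ≠ 0 := by exact_mod_cast ne_of_gt hE0
  -- image facts
  have himg : ∀ w ∈ ExtDisc, 1 < ‖f w‖ ∧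
      ¬∃ x : ℝ, 1 < x ∧ x ≤ 1 + d ∧ f w = (x : ℂ) := by
    intro w hw
    have : f w ∈ f '' ExtDisc := mem_image_of_mem f hw
    rw [himage] at this
    exact ⟨this.1, this.2⟩
  have hseg : ∀ w ∈ ExtDisc, zetam ((E:ℝ):ℂ) (f w) ∉ seg2 := by
    intro w hw
    exact zeta_notin_seg2 hd0 hdc (himg w hw).1 (himg w hw).2
  have hfne : ∀ w ∈ ExtDisc, f w ≠ 0 := by
    intro w hw h
    have := (himg w hw).1
    rw [h] at this; simp at this; linarith
  -- the map u on the unit disc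
  set u : ℂ → ℂ := fun z => if z = 0 then 0 else (kmap (zetam ((E:ℝ):ℂ) (f z⁻¹)))⁻¹ with hu
  have hball : ∀ z : ℂ, z ∈ ball (0:ℂ) 1 → z ≠ 0 → z⁻¹ ∈ ExtDisc := by
    intro z hzb hz0
    rw [mem_ball_zero_iff] at hzb
    have h0 : 0 < ‖z‖ := norm_pos_iff.mpr hz0
    show 1 < ‖z⁻¹‖
    rw [norm_inv]
    rw [lt_inv_comm₀ one_pos h0]
    simpa using hzb
  have hu0 : u 0 = 0 := if_pos rfl
  have hmaps : MapsTo u (ball (0:ℂ) 1) (ball (0:ℂ) 1) := by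
    intro z hzb
    by_cases h0 : z = 0
    · rw [h0, hu0]; exact mem_ball_self one_pos
    · rw [mem_ball_zero_iff, hu]
      simp only [if_neg h0]
      have hk := kmap_abs_gt_one (hseg _ (hball z hzb h0))
      rw [norm_inv]
      exact inv_lt_one_of_one_lt₀ hk
  -- asymptotics
  have t0 : Tendsto (fun z : ℂ => ‖z‖) (comap (fun z : ℂ => ‖z‖) atTop) atTop := tendsto_comap
  have hev1 : ∀ᶠ w : ℂ in comap (fun z : ℂ => ‖z‖) atTop, 1 < ‖w‖ :=
    t0.eventually (eventually_gt_atTop 1)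
  have hevED : ∀ᶠ w : ℂ in comap (fun z : ℂ => ‖z‖) atTop, w ∈ ExtDisc := hev1
  have t3 : Tendsto (fun w : ℂ => (f w)⁻¹) (comap (fun z : ℂ => ‖z‖) atTop) (𝓝 0) := by
    have h := (hlim.inv₀ hec0).mul tendsto_inv_comapAbs
    rw [mul_zero] at h
    apply h.congr'
    filter_upwards [hevED] with w hw
    have hw0 : w ≠ 0 := by
      intro h'; rw [h'] at hw; simp [ExtDisc] at hw; linarith
    have hfw0 := hfne w hw
    field_simp
  have t4 : Tendsto (fun w : ℂ => zetam ((E:ℝ):ℂ) (f w) / w) (comap (fun z : ℂ => ‖z‖) atTop) (𝓝 1) := by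
    have h : Tendsto (fun w : ℂ =>
        (f w / w + (f w)⁻¹ * w⁻¹ - (2*((E:ℝ):ℂ)-2) * w⁻¹) / ((E:ℝ):ℂ))
        (comap (fun z : ℂ => ‖z‖) atTop)
        (𝓝 ((((E:ℝ):ℂ) + 0 * 0 - (2*((E:ℝ):ℂ)-2) * 0) / ((E:ℝ):ℂ))) := by
      exact ((hlim.add (t3.mul tendsto_inv_comapAbs)).sub
        (tendsto_const_nhds.mul tendsto_inv_comapAbs)).div_const _
    have hval : (((E:ℝ):ℂ) + 0 * 0 - (2*((E:ℝ):ℂ)-2) * 0) / ((E:ℝ):ℂ) = 1 := by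
      field_simp
      ring
    rw [hval] at h
    apply h.congr
    intro w
    rw [zetam]
    ring
  have t5 : Tendsto (fun w : ℂ => zetam ((E:ℝ):ℂ) (f w)) (comap (fun z : ℂ => ‖z‖) atTop)
      (comap (fun z : ℂ => ‖z‖) atTop) := by
    rw [tendsto_comap_iff]
    have habs1 := (continuous_norm.tendsto (1:ℂ)).comp t4
    rw [norm_one] at habs1
    have h := Tendsto.pos_mul_atTop one_pos habs1 t0
    apply h.congr'
    filter_upwards [hev1] with w hw
    have hw0 : ‖w‖ ≠ 0 := by positivity
    simp only [Function.comp_apply, norm_div]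
    field_simp
  have t6 : Tendsto (fun w : ℂ => kmap (zetam ((E:ℝ):ℂ) (f w)) / zetam ((E:ℝ):ℂ) (f w))
      (comap (fun z : ℂ => ‖z‖) atTop) (𝓝 1) := kmap_div_tendsto.comp t5
  have t7 : Tendsto (fun w : ℂ => kmap (zetam ((E:ℝ):ℂ) (f w)) / w)
      (comap (fun z : ℂ => ‖z‖) atTop) (𝓝 1) := by
    have h := t6.mul t4
    rw [mul_one] at h
    apply h.congr'
    filter_upwards [t5.eventually hev1] with w hw
    have hz0 : zetam ((E:ℝ):ℂ) (f w) ≠ 0 := by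
      intro h'; rw [h'] at hw; simp at hw; linarith
    field_simp
  -- derivative of u at 0
  have hmapinv : Tendsto (fun z : ℂ => z⁻¹) (𝓝[≠] (0:ℂ)) (comap (fun z : ℂ => ‖z‖) atTop) := by
    rw [tendsto_comap_iff]
    have habs0 : Tendsto (fun z : ℂ => ‖z‖) (𝓝[≠] (0:ℂ)) (𝓝[>] (0:ℝ)) := by
      rw [tendsto_nhdsWithin_iff]
      constructor
      · have h1 : Tendsto (fun z : ℂ => ‖z‖) (𝓝 (0:ℂ)) (𝓝 (0:ℝ)) := by
          simpa using continuous_norm.tendsto (0:ℂ)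
        exact h1.mono_left nhdsWithin_le_nhds
      · filter_upwards [self_mem_nhdsWithin] with z hz
        exact norm_pos_iff.mpr hz
    have h := tendsto_inv_nhdsGT_zero.comp habs0
    apply h.congr
    intro z
    simp [Function.comp, norm_inv]
  have hderiv : HasDerivAt u 1 0 := by
    rw [hasDerivAt_iff_tendsto_slope]
    have h := (t7.comp hmapinv).inv₀ one_ne_zero
    rw [inv_one] at h
    apply h.congr'
    filter_upwards [self_mem_nhdsWithin] with z hz
    have hz0 : z ≠ 0 := hz
    have hzi0 : z⁻¹ ≠ 0 := inv_ne_zero hz0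
    have huzz : u z = (kmap (zetam ((E:ℝ):ℂ) (f z⁻¹)))⁻¹ := by
      rw [hu]; exact if_neg hz0
    rw [slope_def_field, huzz, hu0]
    simp only [Function.comp_apply, inv_inv, sub_zero]
    rw [div_inv_eq_mul, mul_inv, div_eq_mul_inv]
  -- differentiability of u on the ball
  have hdiffu : DifferentiableOn ℂ u (ball (0:ℂ) 1) := by
    intro z hzb
    by_cases h0 : z = 0
    · rw [h0]; exact hderiv.differentiableAt.differentiableWithinAt
    · apply DifferentiableAt.differentiableWithinAt
      have hz1 : z⁻¹ ∈ ExtDisc := hball z hzb h0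
      have hdf : DifferentiableAt ℂ f z⁻¹ := hdiff.differentiableAt (extDisc_open.mem_nhds hz1)
      have hfz0 : f z⁻¹ ≠ 0 := hfne _ hz1
      have hzeta : DifferentiableAt ℂ (zetam ((E:ℝ):ℂ)) (f z⁻¹) := by
        apply DifferentiableAt.div_const
        exact (differentiableAt_id.add (differentiableAt_inv hfz0)).sub
          (differentiableAt_const _)
      have hk : DifferentiableAt ℂ kmap (zetam ((E:ℝ):ℂ) (f z⁻¹)) :=
        kmap_differentiableAt (hseg _ hz1)
      have hkne : kmap (zetam ((E:ℝ):ℂ) (f z⁻¹)) ≠ 0 := kmap_ne_zero (hseg _ hz1)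
      have c1 : DifferentiableAt ℂ (fun z : ℂ => z⁻¹) z := differentiableAt_inv h0
      have c2 : DifferentiableAt ℂ (fun z : ℂ => f z⁻¹) z := hdf.comp z c1
      have c3 : DifferentiableAt ℂ (fun z : ℂ => zetam ((E:ℝ):ℂ) (f z⁻¹)) z := by have := hzeta.comp z c2; exact this
      have c4 : DifferentiableAt ℂ (fun z : ℂ => kmap (zetam ((E:ℝ):ℂ) (f z⁻¹))) z := by have := hk.comp z c3; exact this
      have hmain : DifferentiableAt ℂ (fun z : ℂ => (kmap (zetam ((E:ℝ):ℂ) (f z⁻¹)))⁻¹) z :=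
        c4.inv hkne
      apply hmain.congr_of_eventuallyEq
      filter_upwards [isOpen_compl_singleton.mem_nhds (by simpa using h0)] with x hx
      rw [hu]
      simp only [if_neg (by simpa using hx : x ≠ (0:ℂ))]
  -- Schwarz equality case
  have hmaps' : MapsTo u (ball (0:ℂ) 1) (ball (u 0) 1) := by rw [hu0]; exact hmaps
  have hds : dslope u 0 0 = 1 := by rw [dslope_same]; exact hderiv.deriv
  have heq := Complex.affine_of_mapsTo_ball_of_norm_dslope_eq_div hdiffu (hmaps'.mono_right ball_subset_closedBall)
    (mem_ball_self one_pos) (by rw [hds]; norm_num)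
  -- conclude
  intro z hzED
  have hz1 : 1 < ‖z‖ := hzED
  have hz0 : z ≠ 0 := by intro h; rw [h] at hz1; simp at hz1; linarith
  have hzi0 : z⁻¹ ≠ 0 := inv_ne_zero hz0
  have hzb : z⁻¹ ∈ ball (0:ℂ) 1 := by
    rw [mem_ball_zero_iff, norm_inv]
    exact inv_lt_one_of_one_lt₀ hz1
  have huz := heq hzb
  rw [hu0, hds] at huz
  simp only [sub_zero, zero_add, smul_eq_mul, mul_one] at huz
  have hval : (kmap (zetam ((E:ℝ):ℂ) (f z)))⁻¹ = z⁻¹ := by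
    rw [hu] at huz
    simp only [if_neg hzi0, inv_inv] at huz
    exact huz
  have hkz : kmap (zetam ((E:ℝ):ℂ) (f z)) = z := inv_injective hval
  have hsum := kmap_add_inv (hseg z hzED)
  rw [hkz] at hsum
  rw [zetam] at hsum
  have hfz0 := hfne z hzED
  field_simp at hsum ⊢
  linear_combination -hsum

/-- Explicit formula for the modulus of the derivative of the slit map:
`|f'(z)| = (|f(z)|/|z|)·|z−1| / (|z−e^{iβ}|^{1/2}·|z−e^{−iβ}|^{1/2})` on `Δ`. -/
theorem slit_map_derivative_formula
    (c d β : ℝ) (f : ℂ → ℂ)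
    (hc0 : 0 < c) (hc1 : c < 1)
    (hd0 : 0 < d) (hdc : (d + 2) ^ 2 / (d + 1) = 4 * Real.exp c)
    (hf : IsSlitMap c d f)
    (hβ0 : 0 < β) (hβπ : β < Real.pi)
    (hfβ : f (Complex.exp ((β : ℂ) * Complex.I)) = 1)
    (z : ℂ) (hz : z ∈ ExtDisc) :
    ‖deriv f z‖ =
      ‖f z‖ / ‖z‖ * ‖z - 1‖ /
        (Real.sqrt ‖z - Complex.exp ((β : ℂ) * Complex.I)‖ *
         Real.sqrt ‖z - Complex.exp (-(β : ℂ) * Complex.I)‖) := by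
  obtain ⟨hcont, hdiff, hinj, himage, hlim⟩ := hf
  set E : ℝ := Real.exp c with hE
  have hE0 : (0:ℝ) < E := Real.exp_pos _
  have hec0 : ((E : ℝ) : ℂ) ≠ 0 := by exact_mod_cast ne_of_gt hE0
  have hFE := FE_lemma hd0 hdc ⟨hcont, hdiff, hinj, himage, hlim⟩
  set A : ℂ := Complex.exp ((β : ℂ) * Complex.I) with hA
  have hA0 : A ≠ 0 := Complex.exp_ne_zero _
  have hBA : Complex.exp (-(β : ℂ) * Complex.I) = A⁻¹ := by
    rw [hA, ← Complex.exp_neg]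
    congr 1
    ring
  have habsA : ‖A‖ = 1 := by
    rw [hA, Complex.norm_exp]
    simp
  have habsAi : ‖A⁻¹‖ = 1 := by rw [norm_inv, habsA]; norm_num
  -- boundary limit:  ec * (A + A⁻¹) = 4 - 2 ec
  have hS : ((E:ℝ):ℂ) * (A + A⁻¹) = 4 - 2 * ((E:ℝ):ℂ) := by
    have hA1 : A ∈ {z : ℂ | 1 ≤ ‖z‖} := by simp [habsA]
    have hmem : Tendsto (fun t : ℝ => (t : ℂ) * A) (𝓝[>] (1:ℝ))
        (𝓝[{z : ℂ | 1 ≤ ‖z‖}] A) := by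
      rw [tendsto_nhdsWithin_iff]
      constructor
      · have h1 : Tendsto (fun t : ℝ => (t : ℂ) * A) (𝓝 (1:ℝ)) (𝓝 ((1:ℂ) * A)) :=
          (Complex.continuous_ofReal.tendsto 1).mul tendsto_const_nhds
        rw [one_mul] at h1
        exact h1.mono_left nhdsWithin_le_nhds
      · filter_upwards [self_mem_nhdsWithin] with t ht
        have : ‖(t:ℂ) * A‖ = |t| := by
          rw [norm_mul, habsA, Complex.norm_real, Real.norm_eq_abs, mul_one]
        simp only [Set.mem_setOf_eq, this]
        rw [abs_of_pos (by linarith [Set.mem_Ioi.mp ht] : (0:ℝ) < t)]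
        linarith [Set.mem_Ioi.mp ht]
    have hft : Tendsto (fun t : ℝ => f ((t:ℂ) * A)) (𝓝[>] (1:ℝ)) (𝓝 1) := by
      have := (hcont A hA1).tendsto.comp hmem
      rw [hfβ] at this
      exact this
    have hL1 : Tendsto (fun t : ℝ => f ((t:ℂ) * A) + (f ((t:ℂ) * A))⁻¹) (𝓝[>] (1:ℝ))
        (𝓝 2) := by
      have h2 := hft.add (hft.inv₀ one_ne_zero)
      norm_num at h2
      exact h2
    have htA : Tendsto (fun t : ℝ => (t:ℂ) * A) (𝓝[>] (1:ℝ)) (𝓝 A) := by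
      have h1 : Tendsto (fun t : ℝ => (t : ℂ) * A) (𝓝 (1:ℝ)) (𝓝 ((1:ℂ) * A)) :=
        (Complex.continuous_ofReal.tendsto 1).mul tendsto_const_nhds
      rw [one_mul] at h1
      exact h1.mono_left nhdsWithin_le_nhds
    have hL2 : Tendsto (fun t : ℝ => f ((t:ℂ) * A) + (f ((t:ℂ) * A))⁻¹) (𝓝[>] (1:ℝ))
        (𝓝 (((E:ℝ):ℂ) * (A + A⁻¹) + (2 * ((E:ℝ):ℂ) - 2))) := by
      have hbase : Tendsto (fun t : ℝ => ((E:ℝ):ℂ) * ((t:ℂ)*A + ((t:ℂ)*A)⁻¹)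
          + (2 * ((E:ℝ):ℂ) - 2)) (𝓝[>] (1:ℝ))
          (𝓝 (((E:ℝ):ℂ) * (A + A⁻¹) + (2 * ((E:ℝ):ℂ) - 2))) := by
        exact ((tendsto_const_nhds.mul (htA.add (htA.inv₀ hA0))).add tendsto_const_nhds)
      apply hbase.congr'
      filter_upwards [self_mem_nhdsWithin] with t ht
      have ht1 : (1:ℝ) < t := Set.mem_Ioi.mp ht
      have hmemED : (t:ℂ) * A ∈ ExtDisc := by
        show 1 < ‖(t:ℂ) * A‖
        rw [norm_mul, habsA, Complex.norm_real, Real.norm_eq_abs, mul_one, abs_of_pos (by linarith)]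
        exact ht1
      exact (hFE _ hmemED).symm
    have h2 := tendsto_nhds_unique hL1 hL2
    linear_combination -h2
  -- now the pointwise computation
  have hz1 : 1 < ‖z‖ := hz
  have hz0 : z ≠ 0 := by intro h; rw [h] at hz1; simp at hz1; linarith
  have hfz : f z ∈ ExtDisc := by
    have : f z ∈ f '' ExtDisc := mem_image_of_mem f hz
    rw [himage] at this
    exact this.1
  have hm1 : 1 < ‖f z‖ := hfz
  have hF0 : f z ≠ 0 := by intro h; rw [h] at hm1; simp at hm1; linarith
  have hFE_z := hFE z hz
  -- derivative identity
  have hdF : DifferentiableAt ℂ f z := hdiff.differentiableAt (extDisc_open.mem_nhds hz)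
  have hF2 : (f z) ^ 2 ≠ 0 := pow_ne_zero _ hF0
  have hz2 : z ^ 2 ≠ 0 := pow_ne_zero _ hz0
  have hd1 : HasDerivAt (fun w => f w + (f w)⁻¹)
      (deriv f z + (-deriv f z / (f z) ^ 2)) z :=
    (hdF.hasDerivAt).add ((hdF.hasDerivAt).inv hF0)
  have hd2 : HasDerivAt (fun w : ℂ => ((E:ℝ):ℂ) * (w + w⁻¹) + (2 * ((E:ℝ):ℂ) - 2))
      (((E:ℝ):ℂ) * (1 + (-1 / z ^ 2))) z := by
    have h1 : HasDerivAt (fun w : ℂ => w + w⁻¹) (1 + (-1 / z ^ 2)) z :=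
      (hasDerivAt_id z).add ((hasDerivAt_id z).inv hz0)
    simpa using (h1.const_mul (((E:ℝ):ℂ))).add_const (2 * ((E:ℝ):ℂ) - 2)
  have heqd : (fun w => f w + (f w)⁻¹) =ᶠ[𝓝 z]
      (fun w : ℂ => ((E:ℝ):ℂ) * (w + w⁻¹) + (2 * ((E:ℝ):ℂ) - 2)) := by
    filter_upwards [extDisc_open.mem_nhds hz] with w hw
    exact hFE w hw
  have hd1' : HasDerivAt (fun w : ℂ => ((E:ℝ):ℂ) * (w + w⁻¹) + (2 * ((E:ℝ):ℂ) - 2))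
      (deriv f z + (-deriv f z / (f z) ^ 2)) z := by
    exact hd1.congr_of_eventuallyEq heqd.symm
  have hkey : deriv f z + (-deriv f z / (f z) ^ 2) = ((E:ℝ):ℂ) * (1 + (-1 / z ^ 2)) :=
    hd1'.unique hd2
  have hDD : deriv f z * (((f z) ^ 2 - 1) * z ^ 2) = ((E:ℝ):ℂ) * ((z ^ 2 - 1) * (f z) ^ 2) := by
    field_simp at hkey
    linear_combination hkey
  -- polynomial identities
  have hFi : f z * (f z)⁻¹ = 1 := mul_inv_cancel₀ hF0
  have hzi : z * z⁻¹ = 1 := mul_inv_cancel₀ hz0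
  have hAi : A * A⁻¹ = 1 := mul_inv_cancel₀ hA0
  have hFEp : (f z) ^ 2 * z + z = ((E:ℝ):ℂ) * (z ^ 2 + 1) * f z
      + (2 * ((E:ℝ):ℂ) - 2) * (f z * z) := by
    linear_combination (f z * z) * hFE_z - z * hFi + ((E:ℝ):ℂ) * f z * hzi
  have hId1 : (f z - 1) ^ 2 * z = ((E:ℝ):ℂ) * f z * ((z - A) * (z - A⁻¹)) := by
    linear_combination hFEp + (f z * z) * hS - ((E:ℝ):ℂ) * f z * hAi
  have hId2 : (f z + 1) ^ 2 * z = ((E:ℝ):ℂ) * f z * (z + 1) ^ 2 := by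
    linear_combination hFEp
  -- take absolute values
  have habsE : ‖((E:ℝ):ℂ)‖ = E := by
    rw [Complex.norm_real, Real.norm_eq_abs]; exact abs_of_pos hE0
  have g1 : ‖f z - 1‖ ^ 2 * ‖z‖
      = E * (‖f z‖ * (‖z - A‖ * ‖z - A⁻¹‖)) := by
    have := congrArg (fun x : ℂ => ‖x‖) hId1
    simp only [norm_mul, norm_pow, habsE] at this
    linear_combination this
  have g2 : ‖f z + 1‖ ^ 2 * ‖z‖
      = E * (‖f z‖ * ‖z + 1‖ ^ 2) := by
    have := congrArg (fun x : ℂ => ‖x‖) hId2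
    simp only [norm_mul, norm_pow, habsE] at this
    linear_combination this
  have hDD' : deriv f z * (((f z - 1) * (f z + 1)) * z ^ 2)
      = ((E:ℝ):ℂ) * (((z - 1) * (z + 1)) * (f z) ^ 2) := by
    linear_combination hDD
  have gd : ‖deriv f z‖ * (‖f z - 1‖ * ‖f z + 1‖
      * ‖z‖ ^ 2) = E * (‖z - 1‖ * ‖z + 1‖
      * ‖f z‖ ^ 2) := by
    have := congrArg (fun x : ℂ => ‖x‖) hDD'
    simp only [norm_mul, norm_pow, habsE] at this
    linear_combination this
  -- positivity facts
  have hn0 : (0:ℝ) < ‖z‖ := by linarith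
  have hm0 : (0:ℝ) < ‖f z‖ := by linarith
  have hp0 : (0:ℝ) < ‖z - A‖ := by
    rw [norm_pos_iff]
    intro h
    have : z = A := by linear_combination h
    rw [this, habsA] at hz1; linarith
  have hq0 : (0:ℝ) < ‖z - A⁻¹‖ := by
    rw [norm_pos_iff]
    intro h
    have : z = A⁻¹ := by linear_combination h
    rw [this, habsAi] at hz1; linarith
  have hr10 : (0:ℝ) < ‖f z - 1‖ := by
    rw [norm_pos_iff]
    intro h
    have : f z = 1 := by linear_combination h
    rw [this] at hm1; simp at hm1
  have hr20 : (0:ℝ) < ‖f z + 1‖ := by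
    rw [norm_pos_iff]
    intro h
    have : f z = -1 := by linear_combination h
    rw [this] at hm1; simp at hm1
  have ha20 : (0:ℝ) < ‖z + 1‖ := by
    rw [norm_pos_iff]
    intro h
    have : z = -1 := by linear_combination h
    rw [this] at hz1; simp at hz1
  -- the square-root identity
  have hpq0 : (0:ℝ) ≤ ‖z - A‖ * ‖z - A⁻¹‖ := by positivity
  have key : ‖f z - 1‖ * ‖f z + 1‖ * ‖z‖
      = E * ‖f z‖ * ‖z + 1‖
        * Real.sqrt (‖z - A‖ * ‖z - A⁻¹‖) := by
    have hsq : (‖f z - 1‖ * ‖f z + 1‖ * ‖z‖) ^ 2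
        = (E * ‖f z‖ * ‖z + 1‖
          * Real.sqrt (‖z - A‖ * ‖z - A⁻¹‖)) ^ 2 := by
      rw [mul_pow, mul_pow, mul_pow, mul_pow, Real.sq_sqrt hpq0]
      linear_combination (‖f z + 1‖ ^ 2 * ‖z‖) * g1
        + (E * (‖f z‖ * (‖z - A‖ * ‖z - A⁻¹‖))) * g2
    exact (sq_eq_sq₀ (by positivity) (by positivity)).mp hsq
  have hsplit : Real.sqrt (‖z - A‖ * ‖z - A⁻¹‖)
      = Real.sqrt (‖z - A‖) * Real.sqrt (‖z - A⁻¹‖) :=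
    Real.sqrt_mul (le_of_lt hp0) _
  have hsp : (0:ℝ) < Real.sqrt (‖z - A‖) := Real.sqrt_pos.mpr hp0
  have hsq' : (0:ℝ) < Real.sqrt (‖z - A⁻¹‖) := Real.sqrt_pos.mpr hq0
  -- final computation
  have hXr : ‖deriv f z‖
      * (‖z‖ * Real.sqrt (‖z - A‖ * ‖z - A⁻¹‖))
      * (‖f z - 1‖ * ‖f z + 1‖ * ‖z‖)
      = ‖f z‖ * ‖z - 1‖
      * (‖f z - 1‖ * ‖f z + 1‖ * ‖z‖) := by
    linear_combination Real.sqrt (‖z - A‖ * ‖z - A⁻¹‖) * gd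
      - (‖f z‖ * ‖z - 1‖) * key
  have hR0 : ‖f z - 1‖ * ‖f z + 1‖ * ‖z‖ ≠ 0 := by
    positivity
  have hcancel : ‖deriv f z‖
      * (‖z‖ * Real.sqrt (‖z - A‖ * ‖z - A⁻¹‖))
      = ‖f z‖ * ‖z - 1‖ := mul_right_cancel₀ hR0 hXr
  rw [hsplit] at hcancel
  rw [hBA]
  have hn0' : ‖z‖ ≠ 0 := ne_of_gt hn0
  have hsp' : Real.sqrt (‖z - A‖) ≠ 0 := ne_of_gt hsp
  have hsq'' : Real.sqrt (‖z - A⁻¹‖) ≠ 0 := ne_of_gt hsq'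
  rw [eq_div_iff (by positivity : Real.sqrt (‖z - A‖)
    * Real.sqrt (‖z - A⁻¹‖) ≠ 0)]
  rw [div_mul_eq_mul_div, eq_div_iff hn0']
  linear_combination hcancel
end

section
/- There exist constants A > 0 and c₀ > 0 such that for every c ∈ (0, c₀), every normalized exterior slit map f of capacity c, and every w ∈ Δ with |w − 1| ≤ c^{1/2}, one has |f(w) − (1 + d(c))| ≤ A·|w − 1|²/c^{1/2}. -/
open Complex Filter Set Metric Topology


open scoped Classical in
noncomputable def slitRoot (u : ℂ) : ℂ :=
  if h : ∃ ζ : ℂ, 1 < ‖ζ‖ ∧ ζ + ζ⁻¹ = u then h.choose else 0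

lemma jouk_factor {ζ u r₁ r₂ : ℂ} (hζ : ζ ≠ 0) (h : ζ + ζ⁻¹ = u)
    (hs : r₁ + r₂ = u) (hp : r₁ * r₂ = 1) : ζ = r₁ ∨ ζ = r₂ := by
  have h1 : ζ * (ζ + ζ⁻¹) = ζ * u := by rw [h]
  have h0 : (ζ - r₁) * (ζ - r₂) = 0 := by
    have h2 : ζ * ζ⁻¹ = 1 := mul_inv_cancel₀ hζ
    have e : (ζ - r₁) * (ζ - r₂) = ζ * ζ + ζ * ζ⁻¹ - (r₁ + r₂) * ζ + r₁ * r₂ - 1 := by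
      rw [h2]; ring
    rw [e, hs, hp]
    linear_combination h1
  rcases mul_eq_zero.1 h0 with h' | h'
  · exact Or.inl (sub_eq_zero.1 h')
  · exact Or.inr (sub_eq_zero.1 h')

lemma jouk_inj {a b : ℂ} (ha : 1 < ‖a‖) (hb : 1 < ‖b‖)
    (h : a + a⁻¹ = b + b⁻¹) : a = b := by
  have ha0 : a ≠ 0 := by intro h0; rw [h0] at ha; simp at ha; linarith
  have hb0 : b ≠ 0 := by intro h0; rw [h0] at hb; simp at hb; linarith
  by_contra hne
  have hab : a * b ≠ 1 := by
    intro h1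
    have : ‖a * b‖ = 1 := by rw [h1]; simp
    rw [norm_mul] at this
    nlinarith [ha, hb]
  have e1 : a * a⁻¹ = 1 := mul_inv_cancel₀ ha0
  have e2 : b * b⁻¹ = 1 := mul_inv_cancel₀ hb0
  have key : (a - b) * (1 - (a*b)⁻¹) = 0 := by
    rw [mul_inv]
    linear_combination h - b⁻¹ * e1 + a⁻¹ * e2
  rcases mul_eq_zero.1 key with h' | h'
  · exact hne (sub_eq_zero.1 h')
  · have : (a*b)⁻¹ = 1 := by linear_combination -h'
    exact hab (inv_eq_one.mp this)

lemma jouk_exists {u : ℂ} (hu : ∀ x : ℝ, |x| ≤ 2 → u ≠ (x:ℂ)) :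
    ∃ ζ : ℂ, 1 < ‖ζ‖ ∧ ζ + ζ⁻¹ = u := by
  obtain ⟨r, hr⟩ := IsAlgClosed.exists_pow_nat_eq (k := ℂ) (u^2 - 4) (n := 2) (by norm_num)
  set p : ℂ := (u + r)/2 with hp
  set q : ℂ := (u - r)/2 with hq
  have hpq : p * q = 1 := by
    rw [hp, hq]; linear_combination (-(1:ℂ)/4) * hr
  have hsum : p + q = u := by rw [hp, hq]; ring
  have hp0 : p ≠ 0 := fun h => by rw [h, zero_mul] at hpq; exact zero_ne_one hpq
  have habs : ‖p‖ * ‖q‖ = 1 := by rw [← norm_mul, hpq]; simp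
  have hqinv : q = p⁻¹ := eq_inv_of_mul_eq_one_left (by linear_combination hpq)
  have hppos : 0 < ‖p‖ := by
    simpa [norm_pos_iff] using hp0
  rcases lt_trichotomy (‖p‖) 1 with h1 | h1 | h1
  · refine ⟨q, by nlinarith, ?_⟩
    rw [hqinv] at hsum ⊢
    rw [inv_inv]
    linear_combination hsum
  · exfalso
    have hq1 : q = (starRingEnd ℂ) p := by
      rw [hqinv, Complex.inv_eq_conj (by simpa using h1)]
    have hu2 : u = ((2 * p.re : ℝ) : ℂ) := by
      rw [← hsum, hq1, Complex.add_conj]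

    refine hu (2 * p.re) ?_ hu2
    have h3 := Complex.abs_re_le_norm p
    rw [h1] at h3
    rw [abs_mul, _root_.abs_two]
    nlinarith [h3]
  · refine ⟨p, h1, ?_⟩
    rw [← hqinv]; exact hsum

lemma slitRoot_spec {u : ℂ} (hu : ∃ ζ : ℂ, 1 < ‖ζ‖ ∧ ζ + ζ⁻¹ = u) :
    1 < ‖slitRoot u‖ ∧ slitRoot u + (slitRoot u)⁻¹ = u := by
  rw [slitRoot, dif_pos hu]
  exact hu.choose_spec

/-- If `ζ` lies outside the closed unit disc and `ζ + ζ⁻¹` is a real number `y` with `|y| ≤ 2`,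
contradiction. -/
lemma jouk_not_small {ζ : ℂ} {y : ℝ} (hζ : 1 < ‖ζ‖) (h : ζ + ζ⁻¹ = (y:ℂ))
    (hy : |y| ≤ 2) : False := by
  have hζ0 : ζ ≠ 0 := by
    intro h0; rw [h0] at hζ; simp at hζ; linarith
  have hy2 : y^2 ≤ 4 := by nlinarith [abs_le.1 hy]
  set t : ℝ := Real.sqrt (4 - y^2) with ht
  have ht2 : t^2 = 4 - y^2 := Real.sq_sqrt (by linarith)
  set r₁ : ℂ := (↑(y/2) + ↑(t/2) * Complex.I) with hr₁
  set r₂ : ℂ := (↑(y/2) - ↑(t/2) * Complex.I) with hr₂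
  have hsum : r₁ + r₂ = (y:ℂ) := by rw [hr₁, hr₂]; push_cast; ring
  have hprod : r₁ * r₂ = 1 := by
    have hc : ((t:ℂ))^2 = 4 - (y:ℂ)^2 := by
      have e1 : ((t:ℂ))^2 = ((t^2 : ℝ) : ℂ) := by push_cast; ring
      rw [e1, ht2]; push_cast; ring
    have hI : Complex.I^2 = -1 := Complex.I_sq
    rw [hr₁, hr₂]
    push_cast
    linear_combination (-(Complex.I^2)/4) * hc + (-(4 - (y:ℂ)^2)/4) * hI
  have habs1 : ‖r₁‖ = 1 := by
    have : Complex.normSq r₁ = 1 := by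
      rw [hr₁, Complex.normSq_add_mul_I]
      nlinarith [ht2]
    have := Complex.sq_norm r₁
    nlinarith [norm_nonneg r₁, this]
  have habs2 : ‖r₂‖ = 1 := by
    have hns : Complex.normSq r₂ = 1 := by
      have : r₂ = (↑(y/2) + ↑(-(t/2)) * Complex.I) := by rw [hr₂]; push_cast; ring
      rw [this, Complex.normSq_add_mul_I]
      nlinarith [ht2]
    have := Complex.sq_norm r₂
    nlinarith [norm_nonneg r₂]
  rcases jouk_factor hζ0 h hsum hprod with h' | h'
  · rw [h', habs1] at hζ; linarith
  · rw [h', habs2] at hζ; linarith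

/-- If `ζ` lies outside the closed unit disc and `ζ + ζ⁻¹ = y > 2`, then `ζ` is the real
number `x > 1` with `x + x⁻¹ = y`. -/
lemma jouk_big {ζ : ℂ} {y : ℝ} (hζ : 1 < ‖ζ‖) (h : ζ + ζ⁻¹ = (y:ℂ))
    (hy : 2 < y) : ∃ x : ℝ, 1 < x ∧ ζ = (x:ℂ) ∧ x + x⁻¹ = y := by
  have hζ0 : ζ ≠ 0 := by
    intro h0; rw [h0] at hζ; simp at hζ; linarith
  set t : ℝ := Real.sqrt (y^2 - 4) with ht
  have ht0 : 0 ≤ t := Real.sqrt_nonneg _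
  have ht2 : t^2 = y^2 - 4 := Real.sq_sqrt (by nlinarith)
  set x : ℝ := (y + t)/2 with hx
  set x' : ℝ := (y - t)/2 with hx'
  have hx1 : 1 < x := by
    rw [hx]; linarith
  have hsumR : x + x' = y := by rw [hx, hx']; ring
  have hsum : (x:ℂ) + (x':ℂ) = (y:ℂ) := by rw [← Complex.ofReal_add, hsumR]
  have hprodR : x * x' = 1 := by
    rw [hx, hx']; nlinarith
  have hprod : (x:ℂ) * (x':ℂ) = 1 := by rw [← Complex.ofReal_mul, hprodR, Complex.ofReal_one]
  have hxinv : x⁻¹ = x' := by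
    field_simp
    linarith [hprodR]
  rcases jouk_factor hζ0 h hsum hprod with h' | h'
  · exact ⟨x, hx1, h', by rw [hxinv]; nlinarith [hprodR]⟩
  · exfalso
    have : ‖((x':ℂ))‖ = |x'| := by rw [Complex.norm_real, Real.norm_eq_abs]
    rw [h', this] at hζ
    have hx'pos : 0 < x' := by nlinarith
    have : x' < 1 := by nlinarith
    rw [abs_of_pos hx'pos] at hζ
    linarith

/-- strict monotonicity of `x + x⁻¹` on `(1, ∞)` -/
lemma jouk_mono {a b : ℝ} (ha : 1 ≤ a) (hab : a < b) : a + a⁻¹ < b + b⁻¹ := by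
  have ha0 : 0 < a := by linarith
  have hb0 : 0 < b := by linarith
  have hai : a * a⁻¹ = 1 := mul_inv_cancel₀ (ne_of_gt ha0)
  have hbi : b * b⁻¹ = 1 := mul_inv_cancel₀ (ne_of_gt hb0)
  have h1 : a⁻¹ ≤ 1 := by nlinarith
  have h2 : b⁻¹ < 1 := by nlinarith
  nlinarith [mul_pos ha0 hb0, sub_pos.2 hab]

set_option maxHeartbeats 2000000 in
lemma slit_eq {c d : ℝ} {f : ℂ → ℂ} (hc : 0 < c) (hd : 0 < d)
    (hrel : (d + 2) ^ 2 / (d + 1) = 4 * Real.exp c) (hf : IsSlitMap c d f) :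
    ∀ z ∈ ExtDisc, f z + (f z)⁻¹
      = ((Real.exp c : ℝ) : ℂ) * (z + z⁻¹) + ((2 * Real.exp c - 2 : ℝ) : ℂ) := by
  obtain ⟨hcont, hdiff, hinj, himg, hlim⟩ := hf
  set E : ℝ := Real.exp c with hE
  have hE1 : 1 < E := by
    have := Real.add_one_le_exp c; rw [hE]; linarith
  have hE0 : (E:ℂ) ≠ 0 := by
    simp only [ne_eq, Complex.ofReal_eq_zero]; intro h0; rw [h0] at hE1; linarith
  have hd1 : (0:ℝ) < d + 1 := by linarith
  have hm : d ^ 2 / (d + 1) = 4 * E - 4 := by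
    field_simp at hrel ⊢
    nlinarith [hrel]
  have hs4 : (1 + d) + (1 + d)⁻¹ = 4 * E - 2 := by
    have h2 : d^2 = (4*E - 4) * (d+1) := by
      field_simp at hm; linarith [hm]
    field_simp
    nlinarith [h2]
  have hopen : IsOpen ExtDisc := isOpen_lt continuous_const continuous_norm
  have hmem : ∀ z ∈ ExtDisc, 1 < ‖f z‖ ∧
      ¬ ∃ x : ℝ, 1 < x ∧ x ≤ 1 + d ∧ f z = (x:ℂ) := by
    intro z hz
    have h1 : f z ∈ f '' ExtDisc := ⟨z, hz, rfl⟩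
    rw [himg] at h1
    exact ⟨h1.1, h1.2⟩
  set v : ℂ → ℂ := fun z => (f z + (f z)⁻¹ - ((2*E - 2 : ℝ):ℂ)) / (E:ℂ) with hv
  have havoid : ∀ z ∈ ExtDisc, ∀ x : ℝ, |x| ≤ 2 → v z ≠ (x:ℂ) := by
    intro z hz x hx hvx
    obtain ⟨hfz, hslit⟩ := hmem z hz
    set y : ℝ := E * x + (2*E - 2) with hy
    have hfy : f z + (f z)⁻¹ = (y:ℂ) := by
      have h1 : (f z + (f z)⁻¹ - ((2*E - 2 : ℝ):ℂ)) / (E:ℂ) = (x:ℂ) := hvx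
      rw [div_eq_iff hE0] at h1
      rw [hy]; push_cast at h1 ⊢
      linear_combination h1
    have hxle : x ≤ 2 := (abs_le.1 hx).2
    have hxge : -2 ≤ x := (abs_le.1 hx).1
    rcases le_or_gt y 2 with hy2 | hy2
    · refine jouk_not_small hfz hfy (abs_le.2 ⟨?_, hy2⟩)
      rw [hy]; nlinarith
    · obtain ⟨x₀, hx₀1, hx₀eq, hx₀y⟩ := jouk_big hfz hfy hy2
      have hx₀d : x₀ ≤ 1 + d := by
        by_contra hgt
        push_neg at hgt
        have hmono := jouk_mono (by linarith : (1:ℝ) ≤ 1 + d) hgt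
        rw [hs4, hx₀y] at hmono
        have : y ≤ 4*E - 2 := by rw [hy]; nlinarith
        linarith
      exact hslit ⟨x₀, hx₀1, hx₀d, hx₀eq⟩
  set h : ℂ → ℂ := fun z => slitRoot (v z) with hh
  have hspec : ∀ z ∈ ExtDisc, 1 < ‖h z‖ ∧ h z + (h z)⁻¹ = v z :=
    fun z hz => slitRoot_spec (jouk_exists (havoid z hz))
  have hvdiff : ∀ z ∈ ExtDisc, DifferentiableAt ℂ v z := by
    intro z hz
    have hfd : DifferentiableAt ℂ f z := (hdiff z hz).differentiableAt (hopen.mem_nhds hz)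
    have hfz0 : f z ≠ 0 := by
      intro h0
      have h1 := (hmem z hz).1; rw [h0] at h1; simp at h1; linarith
    exact ((hfd.add (hfd.inv hfz0)).sub_const _).div_const _
  have hhdiff : ∀ z ∈ ExtDisc, DifferentiableAt ℂ h z := by
    intro z₀ hz₀
    obtain ⟨hζ₀, hφζ₀⟩ := hspec z₀ hz₀
    set ζ₀ : ℂ := h z₀ with hζdef
    have hζ00 : ζ₀ ≠ 0 := by intro h0; rw [h0] at hζ₀; simp at hζ₀; linarith
    have hφd : HasStrictDerivAt (fun ζ : ℂ => ζ + ζ⁻¹) (1 + -(ζ₀^2)⁻¹) ζ₀ :=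
      (hasStrictDerivAt_id ζ₀).add (hasStrictDerivAt_inv hζ00)
    have hder0 : (1 + -(ζ₀^2)⁻¹ : ℂ) ≠ 0 := by
      intro h0
      have h1 : (ζ₀^2)⁻¹ = 1 := by linear_combination -h0
      have h2 : ζ₀^2 = 1 := inv_eq_one.mp h1
      have h3 : ‖ζ₀‖ ^ 2 = 1 := by
        have h4 := congrArg norm h2
        rwa [norm_pow, norm_one] at h4
      nlinarith [h3]
    have F := hφd.hasStrictFDerivAt_equiv hder0
    set ψ := F.localInverse _ _ _ with hψ
    have hvcont : ContinuousAt v z₀ := (hvdiff z₀ hz₀).continuousAt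
    have hψcont : ContinuousAt ψ (v z₀) := by
      have h1 := F.localInverse_continuousAt
      simpa only [hφζ₀] using h1
    have hψv : ψ (v z₀) = ζ₀ := by
      have h1 := F.localInverse_apply_image
      simpa only [hφζ₀] using h1
    have hψdiff : DifferentiableAt ℂ ψ (v z₀) := by
      have h1 := F.to_localInverse.differentiableAt
      simpa only [hφζ₀] using h1
    have ev1 : ∀ᶠ z in 𝓝 z₀, z ∈ ExtDisc := hopen.eventually_mem hz₀
    have ev2 : ∀ᶠ z in 𝓝 z₀, ψ (v z) + (ψ (v z))⁻¹ = v z := by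
      have h1 := F.eventually_right_inverse
      simp only [hφζ₀] at h1
      exact hvcont.eventually h1
    have hcomp : ContinuousAt (fun z => ψ (v z)) z₀ := hψcont.comp hvcont
    have hmem' : ψ (v z₀) ∈ ExtDisc := by rw [hψv]; exact hζ₀
    have ev3 : ∀ᶠ z in 𝓝 z₀, ψ (v z) ∈ ExtDisc := hcomp.eventually (hopen.eventually_mem hmem')
    have hev : h =ᶠ[𝓝 z₀] fun z => ψ (v z) := by
      filter_upwards [ev1, ev2, ev3] with z h1 h2 h3
      have h2' : ψ (v z) + (ψ (v z))⁻¹ = v z := h2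
      exact jouk_inj (hspec z h1).1 h3 (by rw [(hspec z h1).2, h2'])
    exact (hψdiff.comp z₀ (hvdiff z₀ hz₀)).congr_of_eventuallyEq hev
  -- limits at infinity
  set L := Filter.comap (fun z : ℂ => ‖z‖) Filter.atTop with hL
  have hLExt : ExtDisc ∈ L := preimage_mem_comap (Ioi_mem_atTop 1)
  have habsTop : Tendsto (fun z : ℂ => ‖z‖) L atTop := tendsto_comap
  have hainv : Tendsto (fun z : ℂ => (‖z‖)⁻¹) L (𝓝 0) :=
    tendsto_inv_atTop_zero.comp habsTop
  have hinvz : Tendsto (fun z : ℂ => z⁻¹) L (𝓝 (0:ℂ)) := by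
    rw [tendsto_zero_iff_norm_tendsto_zero]
    simpa [norm_inv] using hainv
  have hsq : ∀ (g : ℂ → ℂ), (∀ᶠ z in L, 1 ≤ ‖g z‖) →
      Tendsto (fun z => (g z)⁻¹ * z⁻¹) L (𝓝 (0:ℂ)) := by
    intro g hg
    apply squeeze_zero_norm' (a := fun z : ℂ => (‖z‖)⁻¹) _ hainv
    filter_upwards [hg, hLExt] with z h1 h2
    have h2' : (1:ℝ) < ‖z‖ := h2
    have hgz : (0:ℝ) < ‖g z‖ := by linarith
    have hz : (0:ℝ) < ‖z‖ := by linarith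
    have e : ‖(g z)⁻¹ * z⁻¹‖ = (‖g z‖)⁻¹ * (‖z‖)⁻¹ := by
      simp [norm_inv]
    rw [e]
    have h3 : (‖g z‖)⁻¹ ≤ 1 := by
      rw [inv_le_one_iff₀]; right; exact h1
    have h4 : (0:ℝ) ≤ (‖z‖)⁻¹ := by positivity
    nlinarith
  have hfbig : ∀ᶠ z in L, 1 ≤ ‖f z‖ := by
    filter_upwards [hLExt] with z hz; exact le_of_lt (hmem z hz).1
  have hhbig : ∀ᶠ z in L, 1 ≤ ‖h z‖ := by
    filter_upwards [hLExt] with z hz; exact le_of_lt (hspec z hz).1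
  have hfdivz : Tendsto (fun z : ℂ => f z * z⁻¹) L (𝓝 (E:ℂ)) := by
    have := hlim
    simp only [div_eq_mul_inv] at this
    exact this
  have hvz : Tendsto (fun z => v z * z⁻¹) L (𝓝 1) := by
    have h1 := ((hfdivz.add (hsq f hfbig)).sub (hinvz.const_mul ((2*E-2:ℝ):ℂ))).div_const (E:ℂ)
    have h2 : ((E:ℂ) + 0 - ((2*E-2:ℝ):ℂ) * 0) / (E:ℂ) = 1 := by
      rw [mul_zero, sub_zero, add_zero, div_self hE0]
    rw [h2] at h1
    refine h1.congr fun z => ?_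
    simp only [hv]
    ring
  have hhz : Tendsto (fun z => h z * z⁻¹) L (𝓝 1) := by
    have h1 : Tendsto (fun z => v z * z⁻¹ - (h z)⁻¹ * z⁻¹) L (𝓝 (1 - 0)) :=
      hvz.sub (hsq h hhbig)
    rw [sub_zero] at h1
    refine h1.congr' ?_
    filter_upwards [hLExt] with z hz
    have hs := (hspec z hz).2
    linear_combination (-(z⁻¹)) * hs
  -- the quotient function on the unit disc
  classical
  set G : ℂ → ℂ := fun z => if z = (0:ℂ) then 1 else (z * h z⁻¹)⁻¹ with hG
  have hjL : Tendsto (fun z : ℂ => z⁻¹) (𝓝[≠] (0:ℂ)) L := by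
    rw [hL, tendsto_comap_iff]
    have e : ((fun z : ℂ => ‖z‖) ∘ fun z : ℂ => z⁻¹) = fun z : ℂ => (‖z‖)⁻¹ := by
      funext z; simp [norm_inv]
    rw [e]
    have h1 : Tendsto (fun z : ℂ => ‖z‖) (𝓝[≠] (0:ℂ)) (𝓝[>] (0:ℝ)) := by
      refine tendsto_nhdsWithin_of_tendsto_nhds_of_eventually_within _ ?_ ?_
      · have h2 := (continuous_norm.tendsto (0:ℂ)).mono_left
          (nhdsWithin_le_nhds (s := {(0:ℂ)}ᶜ))
        simpa using h2
      · filter_upwards [self_mem_nhdsWithin] with z hz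
        exact norm_pos_iff.mpr hz
    exact tendsto_inv_nhdsGT_zero.comp h1
  have hG1 : Tendsto G (𝓝[≠] (0:ℂ)) (𝓝 1) := by
    have h1 : Tendsto (fun z : ℂ => h z⁻¹ * z) (𝓝[≠] (0:ℂ)) (𝓝 1) := by
      have h2 := hhz.comp hjL
      refine h2.congr fun z => ?_
      simp [Function.comp, inv_inv]
    have h2 : Tendsto (fun z : ℂ => (h z⁻¹ * z)⁻¹) (𝓝[≠] (0:ℂ)) (𝓝 1) := by
      simpa using h1.inv₀ one_ne_zero
    refine h2.congr' ?_
    filter_upwards [self_mem_nhdsWithin] with z hz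
    have hz' : ¬ z = (0:ℂ) := hz
    simp only [hG]
    rw [if_neg hz', mul_comm]
  have hGd : DifferentiableOn ℂ G (ball (0:ℂ) 1) := by
    rw [← Complex.differentiableOn_compl_singleton_and_continuousAt_iff
      (c := (0:ℂ)) (ball_mem_nhds 0 one_pos)]
    constructor
    · rintro z ⟨hz1, hz0⟩
      have hz0' : z ≠ 0 := hz0
      have habs : ‖z‖ < 1 := by
        simpa using mem_ball_zero_iff.1 hz1
      have hzinv : z⁻¹ ∈ ExtDisc := by
        simp only [ExtDisc, mem_setOf_eq, norm_inv]
        exact (one_lt_inv₀ (norm_pos_iff.mpr hz0')).2 habs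
      have hd1 : DifferentiableAt ℂ (fun z : ℂ => z * h z⁻¹) z :=
        differentiableAt_id.mul ((hhdiff _ hzinv).comp z (differentiableAt_inv hz0'))
      have hne : z * h z⁻¹ ≠ 0 := by
        refine mul_ne_zero hz0' ?_
        intro h0
        have h1 := (hspec _ hzinv).1; rw [h0] at h1; simp at h1; linarith
      have hd2 : DifferentiableAt ℂ (fun z : ℂ => (z * h z⁻¹)⁻¹) z := hd1.inv hne
      refine (hd2.congr_of_eventuallyEq ?_).differentiableWithinAt
      filter_upwards [eventually_ne_nhds hz0'] with w hw
      simp only [hG]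
      rw [if_neg hw]
    · have hp : Tendsto G (pure (0:ℂ)) (𝓝 1) := by
        have hG0 : G 0 = 1 := by simp [hG]
        have := tendsto_pure_nhds G 0
        rwa [hG0] at this
      have ht : Tendsto G (𝓝 (0:ℂ)) (𝓝 1) := by
        rw [← nhdsNE_sup_pure]
        exact tendsto_sup.2 ⟨hG1, hp⟩
      have hG0 : G 0 = 1 := by simp [hG]
      rw [ContinuousAt, hG0]; exact ht
  have hGle : ∀ z ∈ ball (0:ℂ) 1, ‖G z‖ ≤ 1 := by
    intro z₀ hz₀
    rcases eq_or_ne z₀ 0 with rfl | hz00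
    · simp [hG]
    · have habs0 : ‖z₀‖ < 1 := by
        simpa using mem_ball_zero_iff.1 hz₀
      have key : ∀ r : ℝ, ‖z₀‖ ≤ r → r < 1 → ‖G z₀‖ ≤ r⁻¹ := by
        intro r hr1 hr2
        have hr0 : 0 < r := lt_of_lt_of_le (norm_pos_iff.mpr hz00) hr1
        have hcl : closure (ball (0:ℂ) r) = closedBall 0 r := closure_ball 0 (ne_of_gt hr0)
        refine norm_le_of_forall_mem_frontier_norm_le (U := ball (0:ℂ) r) isBounded_ball ⟨?_, ?_⟩ ?_ ?_
        · exact hGd.mono (ball_subset_ball (le_of_lt hr2))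
        · rw [hcl]
          exact hGd.continuousOn.mono (closedBall_subset_ball hr2)
        · intro ζ hζ
          rw [frontier_ball 0 (ne_of_gt hr0)] at hζ
          have hζr : ‖ζ‖ = r := by
            simpa using mem_sphere_zero_iff_norm.1 hζ
          have hζ0 : ζ ≠ 0 := by
            intro h0; rw [h0] at hζr; simp at hζr; linarith
          have hζinv : ζ⁻¹ ∈ ExtDisc := by
            simp only [ExtDisc, mem_setOf_eq, norm_inv]
            rw [hζr]
            exact (one_lt_inv₀ hr0).2 hr2
          have hval : G ζ = (ζ * h ζ⁻¹)⁻¹ := by simp only [hG]; rw [if_neg hζ0]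
          rw [hval]
          have hhb := (hspec _ hζinv).1
          have e : ‖(ζ * h ζ⁻¹)⁻¹‖ = (r * ‖h ζ⁻¹‖)⁻¹ := by
            simp [norm_inv, hζr]
          rw [e]
          have h5 : r ≤ r * ‖h ζ⁻¹‖ := by nlinarith
          have h6 : 0 < r * ‖h ζ⁻¹‖ := by nlinarith
          rw [inv_le_inv₀ h6 hr0]
          exact h5
        · rw [hcl, mem_closedBall_zero_iff]
          simpa using hr1
      by_contra hgt
      push_neg at hgt
      have hGpos : 0 < ‖G z₀‖ := lt_trans one_pos hgt
      have hinvlt : ‖G z₀‖⁻¹ < 1 := by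
        rw [inv_lt_one_iff₀]; right; exact hgt
      obtain ⟨r, hr1, hr2⟩ := exists_between (max_lt habs0 hinvlt)
      have h1 := key r (le_of_lt (lt_of_le_of_lt (le_max_left _ _) hr1)) hr2
      have hrpos : 0 < r := lt_of_le_of_lt (le_max_of_le_right (by positivity)) hr1
      have h2 : ‖G z₀‖⁻¹ < r := lt_of_le_of_lt (le_max_right _ _) hr1
      have h3 : r⁻¹ < ‖G z₀‖ := by
        have hrinv : 0 < r⁻¹ := by positivity
        nlinarith [mul_inv_cancel₀ (ne_of_gt hGpos), mul_inv_cancel₀ (ne_of_gt hrpos),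
          mul_pos hGpos hrpos]
      linarith
  have hmax : IsMaxOn (norm ∘ G) (ball (0:ℂ) 1) 0 := by
    intro z hz
    have hG0 : G 0 = 1 := by simp [hG]
    simp only [Function.comp_apply, mem_setOf_eq, hG0, norm_one]
    exact hGle z hz
  have hconst := Complex.eqOn_of_isPreconnected_of_isMaxOn_norm
    (convex_ball (0:ℂ) 1).isPreconnected isOpen_ball hGd (mem_ball_self one_pos) hmax
  -- conclusion
  intro z hz
  have hz1 : (1:ℝ) < ‖z‖ := hz
  have hz0 : z ≠ 0 := by
    intro h0; rw [h0] at hz1; simp at hz1; linarith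
  have hzinv : z⁻¹ ∈ ball (0:ℂ) 1 := by
    rw [mem_ball_zero_iff]
    simp only [norm_inv]
    exact (inv_lt_one₀ (lt_trans one_pos hz1)).2 hz1
  have hzinv0 : z⁻¹ ≠ 0 := inv_ne_zero hz0
  have hGz := hconst hzinv
  have hG0 : G 0 = 1 := by simp [hG]
  simp only [Function.const_apply, hG0] at hGz
  simp only [hG] at hGz
  rw [if_neg hzinv0, inv_inv] at hGz
  have hzh : z⁻¹ * h z = 1 := inv_eq_one.mp hGz
  have hhzz : h z = z := ((inv_mul_eq_one₀ hz0).mp hzh).symm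
  have hsp := (hspec z hz).2
  rw [hhzz] at hsp
  simp only [hv] at hsp
  have h9 := (eq_div_iff hE0).mp hsp
  linear_combination -h9


set_option maxHeartbeats 1000000 in
/-- Near the preimage of the slit tip, the slit map is close to the tip `1 + d(c)`:
`f(w) = 1 + d(c) + O(|w−1|²/c^{1/2})` for `|w − 1| ≤ c^{1/2}`. -/
theorem slit_map_value_near_tip :
    ∃ A c₀ : ℝ, 0 < A ∧ 0 < c₀ ∧
      ∀ c d : ℝ, ∀ f : ℂ → ℂ,
        0 < c → c < c₀ →
        0 < d → (d + 2) ^ 2 / (d + 1) = 4 * Real.exp c →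
        IsSlitMap c d f →
        ∀ w ∈ ExtDisc,
          ‖w - 1‖ ≤ Real.sqrt c →
          ‖f w - (1 + (d : ℂ))‖ ≤ A * ‖w - 1‖ ^ 2 / Real.sqrt c := by
  refine ⟨15, 1, by norm_num, one_pos, ?_⟩
  intro c d f hc hc1 hd hrel hf w hw _hwle
  have hkey := slit_eq hc hd hrel hf w hw
  have himg := hf.2.2.2.1
  set E : ℝ := Real.exp c with hE
  have hE1 : 1 < E := by
    have := Real.add_one_le_exp c; rw [hE]; linarith
  have hEpos : (0:ℝ) < E := by linarith
  have hE3 : E ≤ 3 := by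
    have h1 : E ≤ Real.exp 1 := by rw [hE]; exact Real.exp_le_exp.2 (le_of_lt hc1)
    have h2 := Real.exp_one_lt_d9
    linarith
  have hd1 : (0:ℝ) < d + 1 := by linarith
  have h0 : (d+2)^2 = 4*E*(d+1) := by
    field_simp at hrel; linarith [hrel]
  have hm2 : d^2 = (4*E-4)*(d+1) := by nlinarith [h0]
  have hd9 : d ≤ 9 := by nlinarith [sq_nonneg (d-9), hm2, hE3]
  have h4c : 4*c ≤ d^2 := by nlinarith [Real.add_one_le_exp c, hm2]
  have hsc : 0 < Real.sqrt c := Real.sqrt_pos.2 hc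
  have hdge : 2*Real.sqrt c ≤ d := by
    have h5 : Real.sqrt (4*c) ≤ Real.sqrt (d^2) := Real.sqrt_le_sqrt h4c
    rw [Real.sqrt_sq (le_of_lt hd)] at h5
    have h6 : Real.sqrt (4*c) = 2*Real.sqrt c := by
      rw [show (4:ℝ)*c = (2:ℝ)^2*c by ring, Real.sqrt_mul (by positivity),
        Real.sqrt_sq (by norm_num : (0:ℝ) ≤ 2)]
    linarith
  -- basic nonvanishing
  have hw1 : (1:ℝ) < ‖w‖ := hw
  have hw0 : w ≠ 0 := by intro h; rw [h] at hw1; simp at hw1; linarith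
  have hfw : 1 < ‖f w‖ := by
    have h1 : f w ∈ f '' ExtDisc := ⟨w, hw, rfl⟩
    rw [himg] at h1
    exact h1.1
  set W : ℂ := f w with hW
  set D : ℂ := 1 + (d:ℂ) with hD
  have hDr : D = ((1+d : ℝ):ℂ) := by rw [hD]; push_cast; ring
  have habsD : ‖D‖ = 1 + d := by
    rw [hDr, Complex.norm_real, Real.norm_eq_abs]; exact abs_of_pos (by linarith)
  have hW0 : W ≠ 0 := by intro h; rw [h] at hfw; simp at hfw; linarith
  have hD0 : D ≠ 0 := by intro h; rw [h] at habsD; simp at habsD; linarith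
  have hww : w * w⁻¹ = 1 := mul_inv_cancel₀ hw0
  have hWW : W * W⁻¹ = 1 := mul_inv_cancel₀ hW0
  have hDD : D * D⁻¹ = 1 := mul_inv_cancel₀ hD0
  have hs4 : (1 + d) + (1 + d)⁻¹ = 4 * E - 2 := by
    have h2 : d^2 = (4*E - 4) * (d+1) := hm2
    field_simp
    nlinarith [h2]
  have hDsum : D + D⁻¹ = ((4*E-2 : ℝ):ℂ) := by
    rw [hDr, ← Complex.ofReal_inv, ← Complex.ofReal_add, hs4]
  have e1 : (W - D) * (1 - W⁻¹ * D⁻¹) = (W + W⁻¹) - (D + D⁻¹) := by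
    linear_combination (-(D⁻¹)) * hWW + W⁻¹ * hDD
  have e2 : (E:ℂ) * (w + w⁻¹) + ((2*E-2:ℝ):ℂ) - ((4*E-2:ℝ):ℂ)
      = (E:ℂ) * ((w-1)^2 * w⁻¹) := by
    push_cast
    linear_combination (-(E:ℂ)*(w-2)) * hww
  have hid : (W - D) * (1 - W⁻¹ * D⁻¹) = (E:ℂ) * ((w-1)^2 * w⁻¹) := by
    rw [e1, hkey, hDsum]
    exact e2
  -- take absolute values
  have hrhs : ‖W - D‖ * ‖1 - W⁻¹ * D⁻¹‖
      = E * (‖w-1‖^2 * (‖w‖)⁻¹) := by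
    rw [← norm_mul, hid, norm_mul, norm_mul, norm_pow, norm_inv, Complex.norm_real, Real.norm_eq_abs,
      _root_.abs_of_pos hEpos]
  set B : ℝ := ‖W - D‖ with hB
  set a1 : ℝ := ‖w - 1‖ with ha1
  have hB0 : (0:ℝ) ≤ B := norm_nonneg _
  have hXge : d/(1+d) ≤ ‖1 - W⁻¹*D⁻¹‖ := by
    have h1 : ‖W⁻¹*D⁻¹‖ ≤ (1+d)⁻¹ := by
      rw [norm_mul, norm_inv, norm_inv, habsD]
      have h2 : (‖W‖)⁻¹ ≤ 1 := by
        rw [inv_le_one_iff₀]; right; linarith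
      have hpos : (0:ℝ) < (1+d)⁻¹ := by positivity
      nlinarith [norm_nonneg W]
    have h2 : ‖(1:ℂ)‖ - ‖W⁻¹*D⁻¹‖ ≤ ‖(1:ℂ) - W⁻¹*D⁻¹‖ := norm_sub_norm_le _ _
    simp only [norm_one] at h2
    have h3 : d/(1+d) = 1 - (1+d)⁻¹ := by field_simp; ring
    linarith
  have hawinv : (‖w‖)⁻¹ ≤ 1 := by
    rw [inv_le_one_iff₀]; right; linarith
  have h7 : B * (d/(1+d)) ≤ B * ‖1 - W⁻¹*D⁻¹‖ :=
    mul_le_mul_of_nonneg_left hXge hB0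
  have h8 : E * (a1^2 * (‖w‖)⁻¹) ≤ E * a1^2 := by
    nlinarith [sq_nonneg a1, mul_nonneg (mul_nonneg (le_of_lt hEpos) (sq_nonneg a1))
      (sub_nonneg.2 hawinv)]
  have hBdq : B * (d/(1+d)) ≤ E * a1^2 := by
    rw [hrhs] at h7
    linarith
  have hd1' : (0:ℝ) < 1 + d := by linarith
  have hq : d/(1+d) * (1+d) = d := div_mul_cancel₀ d (ne_of_gt hd1')
  have hBd : B * d ≤ E * a1^2 * (1+d) := by
    nlinarith [mul_le_mul_of_nonneg_right hBdq (le_of_lt hd1'), hq]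
  rw [le_div_iff₀ hsc]
  nlinarith [hBd, mul_nonneg hB0 (sub_nonneg.2 hdge), sq_nonneg a1,
    mul_nonneg (sub_nonneg.2 hE3) (sq_nonneg a1),
    mul_nonneg (sub_nonneg.2 hd9) (sq_nonneg a1), hsc.le]
end

section
/- Fix a real η > 1. There exists a constant A > 0, depending only on η, such that for all real numbers σ, c with 0 < σ ≤ c ≤ 1, ∫_{−c}^{c} |e^{σ + iθ} − 1|^{−η} dθ ≥ A·σ^{1−η}. -/
/-- For fixed `η > 1` there is `A > 0` (depending only on `η`) such that for all
`0 < σ ≤ c ≤ 1`, `∫_{−c}^{c} |e^{σ+iθ} − 1|^{−η} dθ ≥ A·σ^{1−η}`. -/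
theorem regularized_density_integral_lower_bound (η : ℝ) (hη : 1 < η) :
    ∃ A : ℝ, 0 < A ∧
      ∀ σ c : ℝ, 0 < σ → σ ≤ c → c ≤ 1 →
        A * σ ^ (1 - η) ≤
          ∫ θ in (-c)..c,
            ‖Complex.exp ((σ : ℂ) + (θ : ℂ) * Complex.I) - 1‖ ^ (-η) := by
  refine ⟨2 * (8 : ℝ) ^ (-η), by positivity, ?_⟩
  intro σ c hσ hσc hc1
  set f : ℝ → ℝ :=
    fun θ => ‖Complex.exp ((σ : ℂ) + (θ : ℂ) * Complex.I) - 1‖ ^ (-η) with hf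
  have habsexp : ∀ θ : ℝ, ‖Complex.exp ((σ : ℂ) + (θ : ℂ) * Complex.I)‖
      = Real.exp σ := by
    intro θ
    rw [Complex.norm_exp]
    simp
  have hpos : ∀ θ : ℝ, 0 < ‖Complex.exp ((σ : ℂ) + (θ : ℂ) * Complex.I) - 1‖ := by
    intro θ
    have h1 : Real.exp σ - 1
        ≤ ‖Complex.exp ((σ : ℂ) + (θ : ℂ) * Complex.I) - 1‖ := by
      have h := norm_add_le
        (Complex.exp ((σ : ℂ) + (θ : ℂ) * Complex.I) - 1) 1
      simp only [sub_add_cancel, map_one, norm_one, habsexp θ] at h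
      linarith
    have h2 : (1 : ℝ) < Real.exp σ := by
      rw [← Real.exp_zero]
      exact Real.exp_lt_exp.2 hσ
    linarith
  have hcont : Continuous f := by
    apply Continuous.rpow_const
    · exact continuous_norm.comp <| by fun_prop
    · intro x
      exact Or.inl (hpos x).ne'
  have hnonneg : ∀ θ : ℝ, 0 ≤ f θ := fun θ => Real.rpow_nonneg (norm_nonneg _) _
  -- key pointwise bound on [-σ, σ]
  have key : ∀ θ ∈ Set.Icc (-σ) σ,
      ‖Complex.exp ((σ : ℂ) + (θ : ℂ) * Complex.I) - 1‖ ≤ 8 * σ := by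
    intro θ hθ
    have hθabs : |θ| ≤ σ := abs_le.2 ⟨hθ.1, hθ.2⟩
    set z : ℂ := (σ : ℂ) + (θ : ℂ) * Complex.I with hz
    have hzabs : ‖z‖ ≤ 2 * σ := by
      calc ‖z‖ ≤ ‖(σ : ℂ)‖ + ‖(θ : ℂ) * Complex.I‖ :=
            norm_add_le _ _
        _ = |σ| + |θ| := by simp
        _ ≤ 2 * σ := by rw [abs_of_pos hσ]; linarith
    by_cases h1 : ‖z‖ ≤ 1
    · have := Complex.norm_exp_sub_one_le h1
      linarith
    · push_neg at h1
      have hexp : Real.exp σ ≤ 3 := by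
        calc Real.exp σ ≤ Real.exp 1 := Real.exp_le_exp.2 (hσc.trans hc1)
          _ ≤ 3 := by
              have := Real.exp_one_lt_d9
              linarith
      have : ‖Complex.exp z - 1‖ ≤ ‖Complex.exp z‖ + 1 := by
        simpa using norm_sub_le (Complex.exp z) 1
      rw [habsexp θ] at this
      have h4 : ‖Complex.exp z - 1‖ ≤ 4 := by linarith
      have h8 : (4 : ℝ) ≤ 8 * σ := by
        have : (1 : ℝ) < 2 * σ := h1.trans_le hzabs
        linarith
      linarith
  have hK : 0 < 8 * σ := by linarith
  -- lower bound for f on [-σ, σ]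
  have hlow : ∀ θ ∈ Set.Icc (-σ) σ, (8 * σ) ^ (-η) ≤ f θ := by
    intro θ hθ
    exact Real.rpow_le_rpow_of_nonpos (hpos θ) (key θ hθ) (by linarith)
  have hint : IntervalIntegrable f MeasureTheory.volume (-c) c := hcont.intervalIntegrable _ _
  have step1 : ∫ θ in (-σ)..σ, f θ ≤ ∫ θ in (-c)..c, f θ := by
    apply intervalIntegral.integral_mono_interval (by linarith) (by linarith) hσc
    · exact Filter.Eventually.of_forall hnonneg
    · exact hint
  have step2 : (σ - (-σ)) • ((8 * σ) ^ (-η)) ≤ ∫ θ in (-σ)..σ, f θ := by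
    rw [← intervalIntegral.integral_const]
    apply intervalIntegral.integral_mono_on (by linarith)
      (intervalIntegrable_const) (hcont.intervalIntegrable _ _)
    exact hlow
  have hrw : (σ - (-σ)) • ((8 * σ) ^ (-η)) = 2 * (8 : ℝ) ^ (-η) * σ ^ (1 - η) := by
    rw [smul_eq_mul, Real.mul_rpow (by norm_num) hσ.le]
    have h1 : σ ^ (1 - η) = σ ^ (1 : ℝ) * σ ^ (-η) := by
      rw [← Real.rpow_add hσ]
      ring_nf
    rw [h1, Real.rpow_one]
    ring
  calc 2 * (8 : ℝ) ^ (-η) * σ ^ (1 - η) = (σ - (-σ)) • ((8 * σ) ^ (-η)) := hrw.symm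
    _ ≤ ∫ θ in (-σ)..σ, f θ := step2
    _ ≤ ∫ θ in (-c)..c, f θ := step1
end
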